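/- arXiv:2505.15654 — 6 statements merged into one kernel-verified Lean document; each statement's English description precedes it below -/
import Mathlib

section
/- Let Ω₁,...,Ω_Δ be finite probability spaces and Ω = Ω₁ × ... × Ω_Δ their product. Let h : Ω → {0,1,...,Δ} be a function and δ₁,...,δ_Δ ∈ [0,1/2]. For each i ∈ {1,...,Δ}, define Θᵢ as the set of y ∈ Ωᵢ such that Pr_{z∼Ω}[h(z) = i | zᵢ = y] ≥ 1 - δᵢ, and let θᵢ = Pr_{y∼Ωᵢ}[y ∈ Θᵢ]. Then Σᵢ θᵢ ≤ 1/(1 - maxᵢ δᵢ) ≤ 2. -/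
open MeasureTheory Function
open scoped ENNReal

theorem crude_direction_bound {Δ : ℕ} (hΔ : 0 < Δ)
    (Ω : Fin Δ → Type*) [∀ i, Fintype (Ω i)]
    [∀ i, MeasurableSpace (Ω i)] [∀ i, MeasurableSingletonClass (Ω i)]
    (μ : ∀ i, Measure (Ω i)) [∀ i, IsProbabilityMeasure (μ i)]
    (h : (∀ i, Ω i) → Option (Fin Δ))
    (δv : Fin Δ → ℝ) (hδ : ∀ i, δv i ∈ Set.Icc (0 : ℝ) (1 / 2)) :
    (∑ i, ((μ i) {y | 1 - δv i ≤
        ((Measure.pi μ) {z | h (Function.update z i y) = some i}).toReal}).toReal)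
      ≤ 1 / (1 - ⨆ i, δv i) ∧ 1 / (1 - ⨆ i, δv i) ≤ 2 := by
  have hne : Nonempty (Fin Δ) := ⟨⟨0, hΔ⟩⟩
  -- each Ω i nonempty
  have hΩne : ∀ i, Nonempty (Ω i) := by
    intro i
    by_contra hc
    rw [not_nonempty_iff] at hc
    have h1 : (μ i) Set.univ = 1 := measure_univ
    rw [Set.univ_eq_empty_iff.2 hc, measure_empty] at h1
    exact zero_ne_one h1
  -- the sup
  set D := ⨆ i, δv i with hD
  have hDle : D ≤ 1 / 2 := ciSup_le fun i => (hδ i).2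
  have hD0 : 0 ≤ D := le_trans (hδ (Classical.arbitrary _)).1
    (le_ciSup (Set.Finite.bddAbove (Set.finite_range δv)) _)
  have hDpos : (0:ℝ) < 1 - D := by linarith
  constructor
  · -- main inequality
    -- key: Fubini for each coordinate
    have key : ∀ i : Fin Δ,
        (Measure.pi μ) {z | h z = some i} =
        ∫⁻ y, (Measure.pi μ) {z | h (Function.update z i y) = some i} ∂(μ i) := by
      intro i
      classical
      obtain ⟨x₀⟩ := (Classical.nonempty_pi.2 hΩne)
      set A : Set (∀ j, Ω j) := {z | h z = some i} with hA
      have hAm : MeasurableSet A := MeasurableSet.of_discrete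
      set f : (∀ j, Ω j) → ℝ≥0∞ := A.indicator 1 with hf
      have hfm : Measurable f := measurable_of_countable f
      have h1 : (Measure.pi μ) A = ∫⁻ z, f z ∂(Measure.pi μ) := (lintegral_indicator_one hAm).symm
      rw [h1, lintegral_eq_lmarginal_univ x₀,
        lmarginal_erase f hfm (Finset.mem_univ i) x₀]
      congr 1
      ext y
      rw [lmarginal_update_of_notMem hfm (Finset.notMem_erase i _) x₀ y]
      have hgm : Measurable (f ∘ (Function.update · i y)) :=
        measurable_of_countable _
      have step : (∫⋯∫⁻_Finset.univ.erase i, f ∘ (Function.update · i y) ∂μ) x₀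
          = (∫⋯∫⁻_Finset.univ, f ∘ (Function.update · i y) ∂μ) x₀ := by
        conv_rhs => rw [← Finset.insert_erase (Finset.mem_univ i),
          lmarginal_insert' _ hgm (Finset.notMem_erase i _)]
        congr 1
        ext x
        simp only [Function.comp_apply, Function.update_idem, lintegral_const,
          measure_univ, mul_one]
      rw [step, ← lintegral_eq_lmarginal_univ x₀]
      have heq : ∀ z, (f ∘ (Function.update · i y)) z
          = ({z | h (Function.update z i y) = some i} : Set _).indicator 1 z := by
        intro z
        simp only [Function.comp_apply, hf, Set.indicator_apply, hA,
          Set.mem_setOf_eq, Pi.one_apply]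
      rw [lintegral_congr heq, lintegral_indicator_one MeasurableSet.of_discrete]
    -- notation
    set G : ∀ i : Fin Δ, Ω i → ℝ≥0∞ :=
      fun i y => (Measure.pi μ) {z | h (Function.update z i y) = some i} with hG
    set Θ : ∀ i : Fin Δ, Set (Ω i) := fun i => {y | 1 - δv i ≤ (G i y).toReal} with hΘ
    -- Step A
    have stepA : ∀ i, ENNReal.ofReal (1 - δv i) * (μ i) (Θ i)
        ≤ (Measure.pi μ) {z | h z = some i} := by
      intro i
      rw [key i]
      calc ENNReal.ofReal (1 - δv i) * (μ i) (Θ i)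
          = ∫⁻ _ in Θ i, ENNReal.ofReal (1 - δv i) ∂(μ i) := by
            rw [setLIntegral_const, mul_comm]
        _ ≤ ∫⁻ y in Θ i, G i y ∂(μ i) := by
            refine setLIntegral_mono (measurable_of_countable _) ?_
            intro y hy
            have hfin : G i y ≠ ⊤ := measure_ne_top _ _
            exact (ENNReal.ofReal_le_iff_le_toReal hfin).2 hy
        _ ≤ ∫⁻ y, G i y ∂(μ i) := setLIntegral_le_lintegral _ _
    -- Step B
    have hdisj : Pairwise (Function.onFun Disjoint
        (fun i : Fin Δ => {z | h z = some i})) := by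
      intro i j hij
      refine Set.disjoint_left.2 fun z hz1 hz2 => hij ?_
      simp only [Set.mem_setOf_eq] at hz1 hz2
      exact Option.some_injective _ (hz1 ▸ hz2)
    have stepB : ∑ i, (Measure.pi μ) {z | h z = some i} ≤ 1 := by
      rw [← tsum_fintype (L := SummationFilter.unconditional _), ← measure_iUnion hdisj fun i => MeasurableSet.of_discrete]
      exact prob_le_one
    -- convert to reals
    have hθ0 : ∀ i, (0:ℝ) ≤ ((μ i) (Θ i)).toReal := fun i => ENNReal.toReal_nonneg
    have hA : ∀ i, (1 - δv i) * ((μ i) (Θ i)).toReal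
        ≤ ((Measure.pi μ) {z | h z = some i}).toReal := by
      intro i
      have := ENNReal.toReal_mono (measure_ne_top _ _) (stepA i)
      rwa [ENNReal.toReal_mul, ENNReal.toReal_ofReal (by linarith [(hδ i).2])] at this
    have hB : ∑ i, ((Measure.pi μ) {z | h z = some i}).toReal ≤ 1 := by
      have h1 := ENNReal.toReal_mono ENNReal.one_ne_top stepB
      rwa [ENNReal.toReal_sum (fun i _ => measure_ne_top _ _), ENNReal.toReal_one] at h1
    have hδD : ∀ i, δv i ≤ D :=
      fun i => le_ciSup (Set.Finite.bddAbove (Set.finite_range δv)) i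
    rw [le_div_iff₀ hDpos, Finset.sum_mul]
    calc ∑ i, ((μ i) (Θ i)).toReal * (1 - D)
        ≤ ∑ i, (1 - δv i) * ((μ i) (Θ i)).toReal := by
          refine Finset.sum_le_sum fun i _ => ?_
          rw [mul_comm]
          exact mul_le_mul_of_nonneg_right (by linarith [hδD i]) (hθ0 i)
      _ ≤ ∑ i, ((Measure.pi μ) {z | h z = some i}).toReal :=
          Finset.sum_le_sum fun i _ => hA i
      _ ≤ 1 := hB
  · have : 1 / (1 - D) ≤ 1 / (1/2 : ℝ) :=
      one_div_le_one_div_of_le (by norm_num) (by linarith)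
    linarith [this]
end

section
/- Let Ω₁,...,Ω_Δ be finite probability spaces and Ω = Ω₁ × ... × Ω_Δ their product. Let h : Ω → {0,1,...,Δ} and δ₁,...,δ_Δ ∈ [0,1/2]. Define Θᵢ = {y ∈ Ωᵢ : Pr_{z∼Ω}[h(z) = i | zᵢ = y] ≥ 1 - δᵢ} and θᵢ = Pr_{y∼Ωᵢ}[y ∈ Θᵢ]. Then there exists i* ∈ {1,...,Δ} such that Σ_{i ≠ i*} θᵢ ≤ 6e⁴·δ_{i*}. -/
open MeasureTheory

section helpers

private lemma meas_eq_sum_singletons {α : Type*} [Fintype α] [MeasurableSpace α]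
    [MeasurableSingletonClass α] (ν : Measure α) (X : Set α) :
    ν X = ∑ y ∈ X.toFinite.toFinset, ν {y} := by
  classical
  have hX : X = ⋃ y ∈ X.toFinite.toFinset, {y} := by
    ext z; simp [Set.Finite.mem_toFinset]
  have hd : (↑X.toFinite.toFinset : Set α).PairwiseDisjoint (fun y => ({y} : Set α)) :=
    fun a _ b _ hab => by simp [Set.disjoint_singleton, hab]
  have hm : ∀ b ∈ X.toFinite.toFinset, MeasurableSet ({b} : Set α) :=
    fun b _ => measurableSet_singleton b
  conv_lhs => rw [hX]
  exact measure_biUnion_finset hd hm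

private lemma r_biUnion {α β : Type*} [MeasurableSpace α] (ν : Measure α) [IsFiniteMeasure ν]
    (s : Finset β) (f : β → Set α) (hd : (↑s : Set β).PairwiseDisjoint f)
    (hm : ∀ b ∈ s, MeasurableSet (f b)) :
    (ν (⋃ b ∈ s, f b)).toReal = ∑ b ∈ s, (ν (f b)).toReal := by
  rw [measure_biUnion_finset hd hm, ENNReal.toReal_sum (fun b _ => measure_ne_top ν _)]

private lemma nonempty_of_prob {α : Type*} [MeasurableSpace α] (ν : Measure α)
    [IsProbabilityMeasure ν] : Nonempty α := by
  by_contra hne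
  haveI : IsEmpty α := not_nonempty_iff.mp hne
  have h1 : ν Set.univ = 1 := measure_univ
  rw [Set.univ_eq_empty_iff.mpr ‹IsEmpty α›] at h1
  simp at h1

private lemma pi_singleton_class {Δ : ℕ} {Ω : Fin Δ → Type*} [∀ i, Fintype (Ω i)]
    [∀ i, MeasurableSpace (Ω i)] [∀ i, MeasurableSingletonClass (Ω i)] :
    MeasurableSingletonClass (∀ k, Ω k) := by
  constructor
  intro z
  have hz : ({z} : Set (∀ k, Ω k)) = Set.pi Set.univ (fun k => {z k}) := by
    ext w; simp [Set.mem_pi, funext_iff]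
  rw [hz]
  exact MeasurableSet.univ_pi fun k => measurableSet_singleton _

private lemma pi_sing_meas {Δ : ℕ} {Ω : Fin Δ → Type*} [∀ i, Fintype (Ω i)]
    [∀ i, MeasurableSpace (Ω i)] [∀ i, MeasurableSingletonClass (Ω i)]
    (μ : ∀ i, Measure (Ω i)) [∀ i, IsProbabilityMeasure (μ i)] (z : ∀ k, Ω k) :
    Measure.pi μ {z} = ∏ k, μ k {z k} := by
  have hz : ({z} : Set (∀ k, Ω k)) = Set.pi Set.univ (fun k => {z k}) := by
    ext w; simp [Set.mem_pi, funext_iff]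
  rw [hz, Measure.pi_pi]

private lemma Lstar {Δ : ℕ} {Ω : Fin Δ → Type*} [∀ i, Fintype (Ω i)] [∀ i, MeasurableSpace (Ω i)]
    [∀ i, MeasurableSingletonClass (Ω i)] (μ : ∀ i, Measure (Ω i))
    [∀ i, IsProbabilityMeasure (μ i)] (i : Fin Δ) (s : Set (Ω i)) (D : Set (∀ k, Ω k))
    (hD : ∀ z x, Function.update z i x ∈ D ↔ z ∈ D) :
    Measure.pi μ ({z | z i ∈ s} ∩ D) = μ i s * Measure.pi μ D := by
  classical
  haveI := pi_singleton_class (Ω := Ω)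
  obtain ⟨x₀⟩ := nonempty_of_prob (μ i)
  set Fib : Finset (∀ k, Ω k) := (D ∩ {z | z i = x₀}).toFinite.toFinset with hFib
  have key : ∀ t : Set (Ω i),
      Measure.pi μ ({z | z i ∈ t} ∩ D)
        = μ i t * ∑ w ∈ Fib, ∏ k ∈ Finset.univ.erase i, μ k {w k} := by
    intro t
    rw [meas_eq_sum_singletons (Measure.pi μ) ({z | z i ∈ t} ∩ D),
        meas_eq_sum_singletons (μ i) t]
    have hbij :
        ∑ z ∈ ({z | z i ∈ t} ∩ D).toFinite.toFinset, Measure.pi μ {z}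
          = ∑ p ∈ t.toFinite.toFinset ×ˢ Fib, μ i {p.1} * ∏ k ∈ Finset.univ.erase i, μ k {p.2 k} := by
      refine (Finset.sum_nbij' (fun z => (z i, Function.update z i x₀))
        (fun p => Function.update p.2 i p.1) ?_ ?_ ?_ ?_ ?_).symm.symm
      · intro z hz
        simp only [Set.Finite.mem_toFinset, Set.mem_inter_iff, Set.mem_setOf_eq] at hz
        simp only [hFib, Finset.mem_product, Set.Finite.mem_toFinset, Set.mem_inter_iff,
          Set.mem_setOf_eq]
        exact ⟨hz.1, (hD z x₀).mpr hz.2, Function.update_self i x₀ z⟩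
      · intro p hp
        simp only [hFib, Finset.mem_product, Set.Finite.mem_toFinset, Set.mem_inter_iff,
          Set.mem_setOf_eq] at hp
        simp only [Set.Finite.mem_toFinset, Set.mem_inter_iff, Set.mem_setOf_eq]
        exact ⟨by simp [Function.update_self, hp.1], (hD p.2 p.1).mpr hp.2.1⟩
      · intro z hz
        simp [Function.update_idem, Function.update_eq_self]
      · intro p hp
        simp only [hFib, Finset.mem_product, Set.Finite.mem_toFinset, Set.mem_inter_iff,
          Set.mem_setOf_eq] at hp
        have h1 : Function.update p.2 i p.1 i = p.1 := Function.update_self i p.1 p.2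
        have h2 : Function.update (Function.update p.2 i p.1) i x₀ = p.2 := by
          rw [Function.update_idem, ← hp.2.2, Function.update_eq_self]
        exact Prod.ext h1 h2
      · intro z hz
        show (Measure.pi μ) {z}
            = μ i {z i} * ∏ k ∈ Finset.univ.erase i, μ k {Function.update z i x₀ k}
        rw [pi_sing_meas μ z]
        rw [← Finset.mul_prod_erase Finset.univ (fun k => μ k {z k}) (Finset.mem_univ i)]
        congr 1
        refine Finset.prod_congr rfl fun k hk => ?_
        rw [Function.update_of_ne (Finset.ne_of_mem_erase hk) x₀ z]
    rw [hbij, Finset.sum_product, Finset.sum_mul_sum]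
  have hD' : Measure.pi μ D = ∑ w ∈ Fib, ∏ k ∈ Finset.univ.erase i, μ k {w k} := by
    have h0 := key Set.univ
    have h1 : ({z : ∀ k, Ω k | z i ∈ (Set.univ : Set (Ω i))} ∩ D) = D := by
      simp
    rwa [h1, measure_univ, one_mul] at h0
  rw [key s, hD']

private lemma exp_neg_two_le (x : ℝ) (h0 : 0 ≤ x) (h2 : x ≤ 1/2) :
    Real.exp (-(2*x)) ≤ 1 - x := by
  have h2' : 1 ≤ (1 - x) * Real.exp (2*x) := by
    nlinarith [Real.add_one_le_exp (2*x)]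
  have e1 : Real.exp (-(2*x)) * Real.exp (2*x) = 1 := by
    rw [← Real.exp_add]; simp
  nlinarith [Real.exp_pos (2*x), Real.exp_pos (-(2*x))]

private lemma endgame {n : ℕ} (hn : 0 < n) (θ δ : Fin n → ℝ)
    (hθ0 : ∀ i, 0 ≤ θ i) (hθ1 : ∀ i, θ i ≤ 1)
    (hδ0 : ∀ i, 0 ≤ δ i) (hδ2 : ∀ i, δ i ≤ 1/2)
    (F1 : ∑ i, θ i ≤ 1 + ∑ i, δ i * θ i)
    (F2 : ∀ m, ∑ i ∈ Finset.univ.erase m, θ i * θ m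
        ≤ δ m * θ m + ∑ i ∈ Finset.univ.erase m, δ i * θ i)
    (F3 : (∏ k, (1 - θ k)) * (∑ i, θ i * ((∑ j, θ j) - θ i)) ≤ 2 * ∑ k, δ k * θ k) :
    ∃ i₀, ∑ i ∈ Finset.univ.erase i₀, θ i ≤ 6 * Real.exp 4 * δ i₀ := by
  classical
  by_contra hcon
  push_neg at hcon
  haveI : Nonempty (Fin n) := ⟨⟨0, hn⟩⟩
  set C : ℝ := 6 * Real.exp 4 with hC
  have hCexp : C * Real.exp (-(4:ℝ)) = 6 := by
    rw [hC, Real.exp_neg]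
    field_simp
  have hC30 : (30:ℝ) ≤ C := by
    have := Real.add_one_le_exp (4:ℝ)
    nlinarith
  have hCpos : (0:ℝ) < C := by linarith
  set T : ℝ := ∑ j, θ j with hT
  have hsum_erase : ∀ m, ∑ i ∈ Finset.univ.erase m, θ i = T - θ m := fun m =>
    Finset.sum_erase_eq_sub (Finset.mem_univ m)
  have hcon' : ∀ i, C * δ i < T - θ i := by
    intro i; rw [← hsum_erase i]; exact hcon i
  have hSnonneg : ∀ m, 0 ≤ T - θ m := by
    intro m; rw [← hsum_erase m]
    exact Finset.sum_nonneg fun i _ => hθ0 i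
  have hT2 : T ≤ 2 := by
    have h1 : ∑ i, δ i * θ i ≤ ∑ i, (1/2) * θ i :=
      Finset.sum_le_sum fun i _ => mul_le_mul_of_nonneg_right (hδ2 i) (hθ0 i)
    have h2 : ∑ i, (1/2 : ℝ) * θ i = (1/2) * T := by rw [← Finset.mul_sum]
    linarith [F1]
  have hδC : ∀ i, δ i ≤ 2 / C := by
    intro i
    have h1 : C * δ i ≤ 2 := le_trans (hcon' i).le (by linarith [hθ0 i])
    rw [le_div_iff₀ hCpos]
    nlinarith
  obtain ⟨m, -, hm⟩ := Finset.exists_max_image Finset.univ θ Finset.univ_nonempty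
  by_cases hM : 1/2 ≤ θ m
  · -- Case A
    have hL : (1/2) * (T - θ m) ≤ ∑ i ∈ Finset.univ.erase m, θ i * θ m := by
      rw [← hsum_erase m, Finset.mul_sum]
      exact Finset.sum_le_sum fun i _ => by nlinarith [hθ0 i]
    have hR1 : δ m * θ m ≤ δ m := by nlinarith [hδ0 m, hθ1 m]
    have hR2 : ∑ i ∈ Finset.univ.erase m, δ i * θ i ≤ (2/C) * (T - θ m) := by
      rw [← hsum_erase m, Finset.mul_sum]
      exact Finset.sum_le_sum fun i _ =>
        mul_le_mul (hδC i) le_rfl (hθ0 i) (by positivity)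
    have hcm := hcon' m
    have h2C : (2:ℝ)/C ≤ 1/15 := by
      rw [div_le_div_iff₀ hCpos (by norm_num)]; linarith
    have e1 : (0:ℝ) ≤ (1/15 - 2/C) * (T - θ m) :=
      mul_nonneg (by linarith) (hSnonneg m)
    have e2 : 30 * δ m ≤ C * δ m := by nlinarith [hδ0 m]
    nlinarith [F2 m, hL, hR1, hR2, hcm, e1, e2, hSnonneg m, hδ0 m]
  · -- Case B
    push_neg at hM
    have hθhalf : ∀ k, θ k ≤ 1/2 := fun k => le_trans (hm k (Finset.mem_univ k)) hM.le
    set Q : ℝ := ∑ i, θ i * (T - θ i) with hQ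
    have hQ0 : 0 ≤ Q :=
      Finset.sum_nonneg fun i _ => mul_nonneg (hθ0 i) (hSnonneg i)
    set G : ℝ := ∏ k, (1 - θ k) with hG
    have hGexp : Real.exp (-(4:ℝ)) ≤ G := by
      have h1 : Real.exp (-(2*T)) ≤ G := by
        rw [hG]
        have : Real.exp (-(2*T)) = ∏ k, Real.exp (-(2 * θ k)) := by
          rw [← Real.exp_sum]
          congr 1
          rw [hT, Finset.mul_sum, ← Finset.sum_neg_distrib]
        rw [this]
        exact Finset.prod_le_prod (fun k _ => (Real.exp_pos _).le)
          (fun k _ => exp_neg_two_le (θ k) (hθ0 k) (hθhalf k))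
      refine le_trans ?_ h1
      apply Real.exp_le_exp.mpr
      linarith
    have hRHS : 2 * ∑ k, δ k * θ k ≤ (2/C) * Q := by
      rw [hQ, Finset.mul_sum, Finset.mul_sum]
      refine Finset.sum_le_sum fun k _ => ?_
      have h1 : C * (δ k * θ k) ≤ (T - θ k) * θ k := by
        calc C * (δ k * θ k) = (C * δ k) * θ k := by ring
        _ ≤ (T - θ k) * θ k := mul_le_mul_of_nonneg_right (hcon' k).le (hθ0 k)
      rw [div_mul_eq_mul_div, le_div_iff₀ hCpos]
      nlinarith
    rcases eq_or_lt_of_le hQ0 with hQz | hQpos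
    · -- Q = 0
      have hzero : θ m * (T - θ m) = 0 := by
        have := (Finset.sum_eq_zero_iff_of_nonneg
          (fun i _ => mul_nonneg (hθ0 i) (hSnonneg i))).mp hQz.symm
        exact this m (Finset.mem_univ m)
      have hcm := hcon' m
      rcases mul_eq_zero.mp hzero with h | h
      · have hall : ∀ i, θ i = 0 := fun i =>
          le_antisymm (h ▸ hm i (Finset.mem_univ i)) (hθ0 i)
        have : T = 0 := by
          rw [hT]; exact Finset.sum_eq_zero fun i _ => hall i
        rw [this, hall m] at hcm
        nlinarith [hδ0 m]
      · rw [h] at hcm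
        nlinarith [hδ0 m]
    · have hGQ : G * Q ≤ (2/C) * Q := le_trans F3 hRHS
      have hG2C : G ≤ 2/C := le_of_mul_le_mul_right hGQ hQpos
      have : Real.exp (-(4:ℝ)) ≤ 2/C := le_trans hGexp hG2C
      have h6 : (6:ℝ) ≤ 2 := by
        rw [← hCexp]
        calc C * Real.exp (-(4:ℝ)) ≤ C * (2/C) := by
              apply mul_le_mul_of_nonneg_left this hCpos.le
        _ = 2 := by field_simp
      norm_num at h6

end helpers

theorem dominant_direction {Δ : ℕ} (hΔ : 0 < Δ)
    (Ω : Fin Δ → Type*) [∀ i, Fintype (Ω i)]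
    [∀ i, MeasurableSpace (Ω i)] [∀ i, MeasurableSingletonClass (Ω i)]
    (μ : ∀ i, Measure (Ω i)) [∀ i, IsProbabilityMeasure (μ i)]
    (h : (∀ i, Ω i) → Option (Fin Δ))
    (δv : Fin Δ → ℝ) (hδ : ∀ i, δv i ∈ Set.Icc (0 : ℝ) (1 / 2)) :
    ∃ i₀ : Fin Δ, ∑ i ∈ Finset.univ.erase i₀,
        ((μ i) {y | 1 - δv i ≤
          ((Measure.pi μ) {z | h (Function.update z i y) = some i}).toReal}).toReal
      ≤ 6 * Real.exp 4 * δv i₀ := by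
  classical
  haveI := pi_singleton_class (Ω := Ω)
  set P : Measure (∀ k, Ω k) := Measure.pi μ with hPdef
  haveI hPprob : IsProbabilityMeasure P := by
    rw [hPdef]; infer_instance
  set Θ : ∀ i, Set (Ω i) := fun i =>
    {y | 1 - δv i ≤ (P {z | h (Function.update z i y) = some i}).toReal} with hΘdef
  set θ : Fin Δ → ℝ := fun i => (μ i (Θ i)).toReal with hθdef
  have hδ0 : ∀ i, 0 ≤ δv i := fun i => (hδ i).1
  have hδ2 : ∀ i, δv i ≤ 1/2 := fun i => (hδ i).2
  set E : Fin Δ → Set (∀ k, Ω k) := fun i => {z | z i ∈ Θ i} with hEdef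
  set A : Fin Δ → Set (∀ k, Ω k) := fun i => {z | h z = some i} with hAdef
  have hfin : ∀ X, P X ≠ ⊤ := fun X => measure_ne_top P X
  have mall : ∀ S : Set (∀ k, Ω k), MeasurableSet S := fun S =>
    S.to_countable.measurableSet
  have mall1 : ∀ (k : Fin Δ) (s : Set (Ω k)), MeasurableSet s := fun k s =>
    s.to_countable.measurableSet
  have rmono : ∀ {X Y : Set (∀ k, Ω k)}, X ⊆ Y → (P X).toReal ≤ (P Y).toReal :=
    fun hXY => ENNReal.toReal_mono (hfin _) (measure_mono hXY)
  have rle1 : ∀ X : Set (∀ k, Ω k), (P X).toReal ≤ 1 := fun X => by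
    have h1 : P X ≤ 1 := prob_le_one
    simpa using ENNReal.toReal_mono ENNReal.one_ne_top h1
  have runion : ∀ X Y : Set (∀ k, Ω k), (P (X ∪ Y)).toReal ≤ (P X).toReal + (P Y).toReal := by
    intro X Y
    have h1 : P (X ∪ Y) ≤ P X + P Y := measure_union_le X Y
    have h2 := ENNReal.toReal_mono (ENNReal.add_ne_top.mpr ⟨hfin X, hfin Y⟩) h1
    rwa [ENNReal.toReal_add (hfin X) (hfin Y)] at h2
  have hθ0 : ∀ i, 0 ≤ θ i := fun i => ENNReal.toReal_nonneg
  have hθ1 : ∀ i, θ i ≤ 1 := fun i => by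
    have h1 : μ i (Θ i) ≤ 1 := prob_le_one
    simpa [hθdef] using ENNReal.toReal_mono ENNReal.one_ne_top h1
  have rLstar : ∀ (i : Fin Δ) (s : Set (Ω i)) (D : Set (∀ k, Ω k)),
      (∀ z x, Function.update z i x ∈ D ↔ z ∈ D) →
      (P ({z | z i ∈ s} ∩ D)).toReal = (μ i s).toReal * (P D).toReal := by
    intro i s D hD
    rw [hPdef, Lstar μ i s D hD, ENNReal.toReal_mul]
  have hrE : ∀ i, (P (E i)).toReal = θ i := by
    intro i
    have h1 : E i = {z | z i ∈ Θ i} ∩ Set.univ := by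
      rw [hEdef]; simp
    rw [h1, rLstar i (Θ i) Set.univ (fun z x => Iff.rfl)]
    rw [measure_univ]
    simp [hθdef]
  have hrEE : ∀ i j, j ≠ i → (P (E i ∩ E j)).toReal = θ i * θ j := by
    intro i j hji
    have hD : ∀ z x, Function.update z i x ∈ E j ↔ z ∈ E j := by
      intro z x
      simp only [hEdef, Set.mem_setOf_eq, Function.update_of_ne hji]
    have h1 : E i ∩ E j = {z | z i ∈ Θ i} ∩ E j := rfl
    rw [h1, rLstar i (Θ i) (E j) hD, hrE j, hθdef]
  -- key conditional bound
  have keyEA : ∀ i, (P (E i \ A i)).toReal ≤ δv i * θ i := by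
    intro i
    set Dy : Ω i → Set (∀ k, Ω k) :=
      fun y => {z | h (Function.update z i y) = some i}ᶜ with hDydef
    have hdecomp : E i \ A i = ⋃ y ∈ (Θ i).toFinite.toFinset, ({z | z i = y} ∩ Dy y) := by
      ext z
      simp only [Set.mem_diff, hEdef, hAdef, Set.mem_setOf_eq, Set.mem_iUnion,
        Set.Finite.mem_toFinset, Set.mem_inter_iff, hDydef, Set.mem_compl_iff, exists_prop]
      constructor
      · rintro ⟨h1, h2⟩
        exact ⟨z i, h1, rfl, by rwa [Function.update_eq_self]⟩
      · rintro ⟨y, hy, hzy, hz⟩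
        subst hzy
        rw [Function.update_eq_self] at hz
        exact ⟨hy, hz⟩
    have hdisj : ((Θ i).toFinite.toFinset : Set (Ω i)).PairwiseDisjoint
        (fun y => ({z : ∀ k, Ω k | z i = y} ∩ Dy y)) := by
      intro a _ b _ hab
      refine Set.disjoint_left.mpr ?_
      rintro z ⟨hz1, -⟩ ⟨hz2, -⟩
      exact hab (hz1.symm.trans hz2)
    have hsum : (P (E i \ A i)).toReal
        = ∑ y ∈ (Θ i).toFinite.toFinset, (P ({z | z i = y} ∩ Dy y)).toReal := by
      rw [hdecomp, r_biUnion P _ _ hdisj (fun b _ => mall _)]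
    have hterm : ∀ y, (P ({z : ∀ k, Ω k | z i = y} ∩ Dy y)).toReal
        = (μ i {y}).toReal * (P (Dy y)).toReal := by
      intro y
      have hset : {z : ∀ k, Ω k | z i = y} = {z : ∀ k, Ω k | z i ∈ ({y} : Set (Ω i))} := by
        ext z; simp
      have hD : ∀ z x, Function.update z i x ∈ Dy y ↔ z ∈ Dy y := by
        intro z x
        simp only [hDydef, Set.mem_compl_iff, Set.mem_setOf_eq, Function.update_idem]
      rw [hset, rLstar i {y} (Dy y) hD]
    have hDbound : ∀ y ∈ (Θ i).toFinite.toFinset, (P (Dy y)).toReal ≤ δv i := by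
      intro y hy
      rw [Set.Finite.mem_toFinset] at hy
      have hy' : 1 - δv i ≤ (P {z | h (Function.update z i y) = some i}).toReal := by
        simpa [hΘdef, Set.mem_setOf_eq] using hy
      have hcompl : P (Dy y) = 1 - P {z | h (Function.update z i y) = some i} := by
        rw [hDydef]
        rw [measure_compl (mall _) (hfin _), measure_univ]
      have heq : (P (Dy y)).toReal
          = 1 - (P {z | h (Function.update z i y) = some i}).toReal := by
        rw [hcompl, ENNReal.toReal_sub_of_le prob_le_one ENNReal.one_ne_top]
        simp
      rw [heq]; linarith
    calc (P (E i \ A i)).toReal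
        = ∑ y ∈ (Θ i).toFinite.toFinset, (P ({z | z i = y} ∩ Dy y)).toReal := hsum
    _ = ∑ y ∈ (Θ i).toFinite.toFinset, (μ i {y}).toReal * (P (Dy y)).toReal :=
        Finset.sum_congr rfl fun y _ => hterm y
    _ ≤ ∑ y ∈ (Θ i).toFinite.toFinset, (μ i {y}).toReal * δv i := by
        refine Finset.sum_le_sum fun y hy => ?_
        exact mul_le_mul_of_nonneg_left (hDbound y hy) ENNReal.toReal_nonneg
    _ = θ i * δv i := by
        rw [← Finset.sum_mul]
        congr 1
        show ∑ y ∈ (Θ i).toFinite.toFinset, (μ i {y}).toReal = (μ i (Θ i)).toReal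
        rw [meas_eq_sum_singletons (μ i) (Θ i),
          ENNReal.toReal_sum (fun y _ => measure_ne_top _ _)]
    _ = δv i * θ i := mul_comm _ _
  -- disjointness of the A-events
  have hdisjA : ∀ (i j : Fin Δ), i ≠ j → Disjoint (A i ∩ E i) (A j ∩ E j) := by
    intro i j hij
    refine Set.disjoint_left.mpr ?_
    rintro z ⟨hz1, -⟩ ⟨hz2, -⟩
    simp only [hAdef, Set.mem_setOf_eq] at hz1 hz2
    exact hij (Option.some.inj (hz1.symm.trans hz2))
  have hsumAE : ∑ i, (P (A i ∩ E i)).toReal ≤ 1 := by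
    have h1 : (↑(Finset.univ : Finset (Fin Δ)) : Set (Fin Δ)).PairwiseDisjoint
        (fun i => A i ∩ E i) := fun a _ b _ hab => hdisjA a b hab
    have h2 := r_biUnion P Finset.univ (fun i => A i ∩ E i) h1 (fun b _ => mall _)
    rw [← h2]
    exact rle1 _
  have hθle : ∀ i, θ i ≤ (P (A i ∩ E i)).toReal + δv i * θ i := by
    intro i
    have hsub : E i ⊆ (A i ∩ E i) ∪ (E i \ A i) := by
      intro z hz
      by_cases hza : z ∈ A i
      · exact Or.inl ⟨hza, hz⟩
      · exact Or.inr ⟨hz, hza⟩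
    calc θ i = (P (E i)).toReal := (hrE i).symm
    _ ≤ (P ((A i ∩ E i) ∪ (E i \ A i))).toReal := rmono hsub
    _ ≤ (P (A i ∩ E i)).toReal + (P (E i \ A i)).toReal := runion _ _
    _ ≤ (P (A i ∩ E i)).toReal + δv i * θ i := by linarith [keyEA i]
  have F1 : ∑ i, θ i ≤ 1 + ∑ i, δv i * θ i := by
    have h1 : ∑ i, θ i ≤ ∑ i, ((P (A i ∩ E i)).toReal + δv i * θ i) :=
      Finset.sum_le_sum fun i _ => hθle i
    rw [Finset.sum_add_distrib] at h1
    linarith [hsumAE]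
  have F2 : ∀ m, ∑ i ∈ Finset.univ.erase m, θ i * θ m
      ≤ δv m * θ m + ∑ i ∈ Finset.univ.erase m, δv i * θ i := by
    intro m
    have hsub : ∀ i ∈ Finset.univ.erase m, (A i ∩ E i ∩ E m) ⊆ E m \ A m := by
      intro i hi z hz
      obtain ⟨⟨hzA, hzE⟩, hzEm⟩ := hz
      refine ⟨hzEm, fun hzAm => ?_⟩
      simp only [hAdef, Set.mem_setOf_eq] at hzA hzAm
      exact (Finset.ne_of_mem_erase hi) (Option.some.inj (hzA.symm.trans hzAm))
    have hdisj2 : (↑(Finset.univ.erase m) : Set (Fin Δ)).PairwiseDisjoint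
        (fun i => A i ∩ E i ∩ E m) := by
      intro a _ b _ hab
      exact ((hdisjA a b hab).mono Set.inter_subset_left Set.inter_subset_left)
    have hUnion : ∑ i ∈ Finset.univ.erase m, (P (A i ∩ E i ∩ E m)).toReal
        ≤ δv m * θ m := by
      rw [← r_biUnion P _ _ hdisj2 (fun b _ => mall _)]
      refine le_trans (rmono ?_) (keyEA m)
      exact Set.iUnion₂_subset hsub
    have hlow : ∀ i ∈ Finset.univ.erase m, θ i * θ m
        ≤ (P (A i ∩ E i ∩ E m)).toReal + δv i * θ i := by
      intro i hi
      have him : m ≠ i := (Finset.ne_of_mem_erase hi).symm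
      have hsub2 : E i ∩ E m ⊆ (A i ∩ E i ∩ E m) ∪ (E i \ A i) := by
        intro z hz
        by_cases hza : z ∈ A i
        · exact Or.inl ⟨⟨hza, hz.1⟩, hz.2⟩
        · exact Or.inr ⟨hz.1, hza⟩
      calc θ i * θ m = (P (E i ∩ E m)).toReal := (hrEE i m him).symm
      _ ≤ (P ((A i ∩ E i ∩ E m) ∪ (E i \ A i))).toReal := rmono hsub2
      _ ≤ (P (A i ∩ E i ∩ E m)).toReal + (P (E i \ A i)).toReal := runion _ _
      _ ≤ (P (A i ∩ E i ∩ E m)).toReal + δv i * θ i := by linarith [keyEA i]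
    calc ∑ i ∈ Finset.univ.erase m, θ i * θ m
        ≤ ∑ i ∈ Finset.univ.erase m, ((P (A i ∩ E i ∩ E m)).toReal + δv i * θ i) :=
          Finset.sum_le_sum hlow
    _ = (∑ i ∈ Finset.univ.erase m, (P (A i ∩ E i ∩ E m)).toReal)
        + ∑ i ∈ Finset.univ.erase m, δv i * θ i := Finset.sum_add_distrib
    _ ≤ δv m * θ m + ∑ i ∈ Finset.univ.erase m, δv i * θ i := by linarith [hUnion]
  -- the pair events
  set V : Fin Δ → Fin Δ → Set (∀ k, Ω k) := fun i j =>
    Set.pi Set.univ (fun k => if k = i ∨ k = j then Θ k else (Θ k)ᶜ) with hVdef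
  have hVmem : ∀ i j (z : ∀ k, Ω k),
      z ∈ V i j ↔ ∀ k, z k ∈ (if k = i ∨ k = j then Θ k else (Θ k)ᶜ) := by
    intro i j z
    simp [hVdef, Set.mem_pi]
  have hVhalf : ∀ i j, V i j ⊆ V j i := by
    intro i j z hz
    rw [hVmem] at hz ⊢
    intro k
    have Hk := hz k
    by_cases hc : k = j ∨ k = i
    · rw [if_pos hc]; rwa [if_pos hc.symm] at Hk
    · rw [if_neg hc]; rwa [if_neg (fun hc' => hc (Or.symm hc'))] at Hk
  have hVsym : ∀ i j, V i j = V j i := fun i j =>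
    Set.Subset.antisymm (hVhalf i j) (hVhalf j i)
  set G : ℝ := ∏ k, (1 - θ k) with hGdef
  have hrVeq : ∀ i j, j ≠ i → (P (V i j)).toReal
      = θ i * (θ j * ∏ k ∈ (Finset.univ.erase i).erase j, (1 - θ k)) := by
    intro i j hji
    rw [hPdef, hVdef]
    rw [Measure.pi_pi, ENNReal.toReal_prod]
    rw [← Finset.mul_prod_erase Finset.univ _ (Finset.mem_univ i),
        ← Finset.mul_prod_erase (Finset.univ.erase i) _
          (Finset.mem_erase.mpr ⟨hji, Finset.mem_univ j⟩)]
    have hci : (μ i (if i = i ∨ i = j then Θ i else (Θ i)ᶜ)).toReal = θ i := by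
      rw [if_pos (Or.inl rfl), hθdef]
    have hcj : (μ j (if j = i ∨ j = j then Θ j else (Θ j)ᶜ)).toReal = θ j := by
      rw [if_pos (Or.inr rfl), hθdef]
    rw [hci, hcj]
    congr 1
    congr 1
    refine Finset.prod_congr rfl fun k hk => ?_
    have hk1 : k ≠ j := (Finset.mem_erase.mp hk).1
    have hk2 : k ≠ i := (Finset.mem_erase.mp (Finset.mem_erase.mp hk).2).1
    rw [if_neg (fun hc => hc.elim hk2 hk1),
      measure_compl (mall1 k (Θ k)) (measure_ne_top _ _), measure_univ,
      ENNReal.toReal_sub_of_le prob_le_one ENNReal.one_ne_top, ENNReal.toReal_one, hθdef]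
  have hrV : ∀ i j, j ≠ i → G * (θ i * θ j) ≤ (P (V i j)).toReal := by
    intro i j hji
    rw [hrVeq i j hji]
    have h1 : G ≤ ∏ k ∈ (Finset.univ.erase i).erase j, (1 - θ k) := by
      rw [hGdef]
      calc ∏ k, (1 - θ k)
          = (∏ k ∈ Finset.univ \ (Finset.univ.erase i).erase j, (1 - θ k))
            * ∏ k ∈ (Finset.univ.erase i).erase j, (1 - θ k) :=
        (Finset.prod_sdiff (Finset.subset_univ _)).symm
      _ ≤ 1 * ∏ k ∈ (Finset.univ.erase i).erase j, (1 - θ k) := by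
          refine mul_le_mul_of_nonneg_right ?_
            (Finset.prod_nonneg fun k _ => by linarith [hθ1 k])
          exact Finset.prod_le_one (fun k _ => by linarith [hθ1 k])
            (fun k _ => by linarith [hθ0 k])
      _ = _ := one_mul _
    have h2 : 0 ≤ θ i * θ j := mul_nonneg (hθ0 i) (hθ0 j)
    calc G * (θ i * θ j) ≤ (∏ k ∈ (Finset.univ.erase i).erase j, (1 - θ k)) * (θ i * θ j) :=
      mul_le_mul_of_nonneg_right h1 h2
    _ = θ i * (θ j * ∏ k ∈ (Finset.univ.erase i).erase j, (1 - θ k)) := by ring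
  set V' : Fin Δ → Fin Δ → Set (∀ k, Ω k) := fun i j =>
    V i j ∩ {z | ¬ (h z = some i)} with hV'def
  have hV'disj : ∀ i, (↑(Finset.univ.erase i) : Set (Fin Δ)).PairwiseDisjoint
      (fun j => V' i j) := by
    intro i a ha b hb hab
    refine Set.disjoint_left.mpr ?_
    rintro z ⟨hza, -⟩ ⟨hzb, -⟩
    rw [hVmem] at hza hzb
    have h1 := hza b
    have h2 := hzb b
    have hbi : b ≠ i := by
      have := Finset.mem_coe.mp hb
      exact (Finset.mem_erase.mp this).1
    rw [if_neg (fun hc => hc.elim hbi (fun hba => hab hba.symm))] at h1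
    rw [if_pos (Or.inr rfl)] at h2
    exact h1 h2
  have hV'sub : ∀ i, (⋃ j ∈ Finset.univ.erase i, V' i j) ⊆ E i \ A i := by
    intro i z hz
    simp only [Set.mem_iUnion, exists_prop] at hz
    obtain ⟨j, hj, hzV, hzh⟩ := hz
    constructor
    · show z i ∈ Θ i
      have := (hVmem i j z).mp hzV i
      rwa [if_pos (Or.inl rfl)] at this
    · exact hzh
  have hV'bound : ∀ i, ∑ j ∈ Finset.univ.erase i, (P (V' i j)).toReal ≤ δv i * θ i := by
    intro i
    rw [← r_biUnion P _ _ (hV'disj i) (fun b _ => mall _)]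
    exact (rmono (hV'sub i)).trans (keyEA i)
  have hVsplit : ∀ i j, j ≠ i →
      (P (V i j)).toReal ≤ (P (V' i j)).toReal + (P (V' j i)).toReal := by
    intro i j hji
    refine (rmono ?_).trans (runion _ _)
    intro z hz
    by_cases hzi : h z = some i
    · right
      refine ⟨(hVsym i j) ▸ hz, ?_⟩
      show ¬ (h z = some j)
      rw [hzi]
      intro hc
      exact hji (Option.some.inj hc).symm
    · left; exact ⟨hz, hzi⟩
  have hswap : ∀ f : Fin Δ → Fin Δ → ℝ,
      (∑ i, ∑ j ∈ Finset.univ.erase i, f i j)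
        = ∑ i, ∑ j ∈ Finset.univ.erase i, f j i := by
    intro f
    have key : ∀ g : Fin Δ → Fin Δ → ℝ, (∑ i, ∑ j ∈ Finset.univ.erase i, g i j)
        = ∑ i, ∑ j, if j ≠ i then g i j else 0 := by
      intro g
      refine Finset.sum_congr rfl fun i _ => ?_
      rw [← Finset.filter_ne' Finset.univ i, Finset.sum_filter]
    rw [key, key, Finset.sum_comm]
    refine Finset.sum_congr rfl fun i _ => Finset.sum_congr rfl fun j _ => ?_
    exact if_congr ne_comm rfl rfl
  have F3 : G * (∑ i, θ i * ((∑ j, θ j) - θ i)) ≤ 2 * ∑ k, δv k * θ k := by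
    have hper : ∀ i : Fin Δ, G * (θ i * ((∑ j, θ j) - θ i))
        = ∑ j ∈ Finset.univ.erase i, G * (θ i * θ j) := by
      intro i
      calc G * (θ i * ((∑ j, θ j) - θ i))
          = (G * θ i) * ((∑ j, θ j) - θ i) := by ring
      _ = (G * θ i) * ∑ j ∈ Finset.univ.erase i, θ j := by
          rw [Finset.sum_erase_eq_sub (Finset.mem_univ i)]
      _ = ∑ j ∈ Finset.univ.erase i, (G * θ i) * θ j := Finset.mul_sum _ _ _
      _ = ∑ j ∈ Finset.univ.erase i, G * (θ i * θ j) := by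
          refine Finset.sum_congr rfl fun j _ => by ring
    calc G * (∑ i, θ i * ((∑ j, θ j) - θ i))
        = ∑ i, ∑ j ∈ Finset.univ.erase i, G * (θ i * θ j) := by
          rw [Finset.mul_sum]
          exact Finset.sum_congr rfl fun i _ => hper i
    _ ≤ ∑ i, ∑ j ∈ Finset.univ.erase i, (P (V i j)).toReal := by
        refine Finset.sum_le_sum fun i _ => Finset.sum_le_sum fun j hj => ?_
        exact hrV i j (Finset.mem_erase.mp hj).1
    _ ≤ ∑ i, ∑ j ∈ Finset.univ.erase i, ((P (V' i j)).toReal + (P (V' j i)).toReal) := by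
        refine Finset.sum_le_sum fun i _ => Finset.sum_le_sum fun j hj => ?_
        exact hVsplit i j (Finset.mem_erase.mp hj).1
    _ = (∑ i, ∑ j ∈ Finset.univ.erase i, (P (V' i j)).toReal)
        + ∑ i, ∑ j ∈ Finset.univ.erase i, (P (V' j i)).toReal := by
        rw [← Finset.sum_add_distrib]
        exact Finset.sum_congr rfl fun i _ => Finset.sum_add_distrib
    _ = 2 * ∑ i, ∑ j ∈ Finset.univ.erase i, (P (V' i j)).toReal := by
        rw [← hswap (fun i j => (P (V' i j)).toReal)]
        ring
    _ ≤ 2 * ∑ i, δv i * θ i := by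
        have := Finset.sum_le_sum (fun i (_ : i ∈ (Finset.univ : Finset (Fin Δ))) =>
          hV'bound i)
        linarith
  obtain ⟨i₀, hi₀⟩ := endgame hΔ θ δv hθ0 hθ1 hδ0 hδ2 F1 F2 F3
  exact ⟨i₀, hi₀⟩
end

section
/- Let n be an even positive integer, S a subset of vertices of K_n with |S| = k, M a uniformly random perfect matching of K_n, and X = |M ∩ E(K_n[S])|. Let f(t) = Pr[X = t]. Then for every integer t ≥ 1 in the support, f(t-1)·f(t+1) ≤ (t/(t+1))·f(t)², i.e., X is ultra log-concave. -/
/-- The set of perfect matchings of the complete graph `K_n`, encoded as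
fixed-point-free involutions of `Fin n`. -/
def perfectMatchings (n : ℕ) : Finset (Equiv.Perm (Fin n)) :=
  Finset.univ.filter fun σ => ∀ x, σ (σ x) = x ∧ σ x ≠ x

/-- The probability, over a uniformly random perfect matching of `K_n`, that exactly `t`
matching edges have both endpoints in `S`. -/
noncomputable def pmProb (n : ℕ) (S : Finset (Fin n)) (t : ℕ) : ℝ :=
  (((perfectMatchings n).filter fun σ =>
      (S.filter fun x => σ x ∈ S).card = 2 * t).card : ℝ) /
    ((perfectMatchings n).card : ℝ)

open Equiv Finset

namespace PMULC
set_option linter.unusedSectionVars false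
set_option linter.unusedVariables false

variable {n : ℕ}

lemma mem_pm {σ : Perm (Fin n)} :
    σ ∈ perfectMatchings n ↔ (∀ x, σ (σ x) = x) ∧ ∀ x, σ x ≠ x := by
  constructor
  · intro h
    simp only [perfectMatchings, mem_filter, mem_univ, true_and] at h
    exact ⟨fun x => (h x).1, fun x => (h x).2⟩
  · intro h
    simp only [perfectMatchings, mem_filter, mem_univ, true_and]
    exact fun x => ⟨h.1 x, h.2 x⟩

lemma pm_nonempty (hn : Even n) : (perfectMatchings n).Nonempty := by
  obtain ⟨m, hm⟩ := hn
  have h2 : n = n / 2 * 2 := by omega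
  let E : Fin n ≃ Fin (n / 2) × Fin 2 := (finCongr h2).trans finProdFinEquiv.symm
  let ι : Perm (Fin (n / 2) × Fin 2) := (Equiv.refl (Fin (n / 2))).prodCongr (Equiv.swap 0 1)
  have hι2 : ∀ p, ι (ι p) = p := by
    rintro ⟨i, j⟩
    simp [ι, Equiv.prodCongr_apply, Prod.map, Equiv.swap_apply_self]
  have hιne : ∀ p, ι p ≠ p := by
    rintro ⟨i, j⟩ h
    have : Equiv.swap (0 : Fin 2) 1 j = j := congrArg Prod.snd h
    revert this
    fin_cases j <;> decide
  refine ⟨E.trans (ι.trans E.symm), mem_pm.mpr ⟨?_, ?_⟩⟩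
  · intro x
    simp only [Equiv.trans_apply, Equiv.apply_symm_apply]
    rw [hι2, Equiv.symm_apply_apply]
  · intro x h
    simp only [Equiv.trans_apply] at h
    have := congrArg E h
    rw [Equiv.apply_symm_apply] at this
    exact hιne _ this

section Step

variable (σ : Perm (Fin n)) (u v : Fin n)

lemma step_app (w : Fin n) :
    (swap (σ u) v * σ * swap (σ u) v) w = swap (σ u) v (σ (swap (σ u) v w)) := rfl

variable (hinv : ∀ x, σ (σ x) = x) (hfpf : ∀ x, σ x ≠ x) (hvu : v ≠ u) (hvsu : v ≠ σ u)

include hinv hfpf hvu hvsu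

lemma step_u : (swap (σ u) v * σ * swap (σ u) v) u = v := by
  rw [step_app, swap_apply_of_ne_of_ne (hfpf u).symm hvu.symm, swap_apply_left]

lemma step_v : (swap (σ u) v * σ * swap (σ u) v) v = u := by
  rw [step_app, swap_apply_right, hinv,
    swap_apply_of_ne_of_ne (hfpf u).symm hvu.symm]

lemma step_su : (swap (σ u) v * σ * swap (σ u) v) (σ u) = σ v := by
  have h1 : σ v ≠ σ u := fun h => hvu (σ.injective h)
  rw [step_app, swap_apply_left, swap_apply_of_ne_of_ne h1 (hfpf v)]

lemma step_sv : (swap (σ u) v * σ * swap (σ u) v) (σ v) = σ u := by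
  have h1 : σ v ≠ σ u := fun h => hvu (σ.injective h)
  rw [step_app, swap_apply_of_ne_of_ne h1 (hfpf v), hinv, swap_apply_right]

lemma step_other (w : Fin n) (h1 : w ≠ u) (h2 : w ≠ v) (h3 : w ≠ σ u) (h4 : w ≠ σ v) :
    (swap (σ u) v * σ * swap (σ u) v) w = σ w := by
  have h5 : σ w ≠ σ u := fun h => h1 (σ.injective h)
  have h6 : σ w ≠ v := fun h => h4 (by rw [← h, hinv])
  rw [step_app, swap_apply_of_ne_of_ne h3 h2, swap_apply_of_ne_of_ne h5 h6]

lemma step_mem : (swap (σ u) v * σ * swap (σ u) v) ∈ perfectMatchings n := by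
  rw [mem_pm]
  constructor
  · intro x
    simp only [step_app, swap_apply_self, hinv]
  · intro x h
    rw [step_app] at h
    have h' : σ (swap (σ u) v x) = swap (σ u) v x := by
      have := congrArg (swap (σ u) v) h
      rwa [swap_apply_self] at this
    exact hfpf _ h'

end Step

lemma conj_cancel (σ : Perm (Fin n)) (p q : Fin n) :
    swap q p * (swap p q * σ * swap p q) * swap q p = σ := by
  rw [swap_comm q p]
  simp only [← mul_assoc, swap_mul_self, one_mul]
  rw [mul_assoc, swap_mul_self, mul_one]

/-- counting set -/
def Acnt (n : ℕ) (S : Finset (Fin n)) (s : ℕ) : Finset (Perm (Fin n)) :=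
  (perfectMatchings n).filter fun σ => (S.filter fun x => σ x ∈ S).card = 2 * s

lemma Ycard (S : Finset (Fin n)) (σ : Perm (Fin n)) (hinv : ∀ x, σ (σ x) = x) :
    (univ.filter fun y : Fin n => y ∉ S ∧ σ y ∉ S).card + 2 * S.card
      = n + (S.filter fun x => σ x ∈ S).card := by
  classical
  have h1 : (S.filter fun x => σ x ∈ S).card + (S.filter fun x => ¬ σ x ∈ S).card = S.card :=
    card_filter_add_card_filter_not _
  have h2 : ((univ : Finset (Fin n)).filter fun y => y ∈ S).card
      + ((univ : Finset (Fin n)).filter fun y => ¬ y ∈ S).card = n := by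
    rw [card_filter_add_card_filter_not]
    simp
  have h2' : ((univ : Finset (Fin n)).filter fun y => y ∈ S) = S := by
    ext a; simp
  have h3 : (((univ : Finset (Fin n)).filter fun y => ¬ y ∈ S).filter fun y => σ y ∈ S).card
      + (((univ : Finset (Fin n)).filter fun y => ¬ y ∈ S).filter fun y => ¬ σ y ∈ S).card
      = ((univ : Finset (Fin n)).filter fun y => ¬ y ∈ S).card :=
    card_filter_add_card_filter_not _
  have h4 : (S.filter fun x => ¬ σ x ∈ S).card
      = (((univ : Finset (Fin n)).filter fun y => ¬ y ∈ S).filter fun y => σ y ∈ S).card := by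
    apply card_bij (fun a _ => σ a)
    · intro a ha
      simp only [mem_filter, mem_univ, true_and] at ha ⊢
      exact ⟨ha.2, by rw [hinv]; exact ha.1⟩
    · intro a ha b hb hab
      exact σ.injective hab
    · intro b hb
      simp only [mem_filter, mem_univ, true_and] at hb
      exact ⟨σ b, by simp only [mem_filter]; exact ⟨hb.2, by rw [hinv]; exact hb.1⟩, hinv b⟩
  have h5 : (((univ : Finset (Fin n)).filter fun y => ¬ y ∈ S).filter fun y => ¬ σ y ∈ S)
      = (univ.filter fun y : Fin n => y ∉ S ∧ σ y ∉ S) := by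
    rw [filter_filter]
  rw [← h5]
  rw [h2'] at h2
  omega

lemma In_forward (S : Finset (Fin n)) (σ : Perm (Fin n))
    (hinv : ∀ x, σ (σ x) = x) (hfpf : ∀ x, σ x ≠ x) {x y : Fin n}
    (hx : x ∈ S) (hsx : σ x ∈ S) (hy : y ∉ S) (hsy : σ y ∉ S) :
    S.filter (fun v => (swap (σ x) y * σ * swap (σ x) y) v ∈ S)
      = ((S.filter fun v => σ v ∈ S).erase x).erase (σ x) := by
  have hvu : y ≠ x := fun h => hy (h ▸ hx)
  have hvsu : y ≠ σ x := fun h => hy (h ▸ hsx)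
  ext w
  simp only [mem_erase, mem_filter]
  by_cases hwS : w ∈ S
  · by_cases hwx : w = x
    · subst hwx
      rw [step_u σ w y hinv hfpf hvu hvsu]
      simp [hy, hwS]
    · by_cases hwsx : w = σ x
      · subst hwsx
        rw [step_su σ x y hinv hfpf hvu hvsu]
        simp [hsy, hfpf x]
      · have hwy : w ≠ y := fun h => hy (h ▸ hwS)
        have hwsy : w ≠ σ y := fun h => hsy (h ▸ hwS)
        rw [step_other σ x y hinv hfpf hvu hvsu w hwx hwy hwsx hwsy]
        simp [hwS, hwx, hwsx]
  · simp [hwS]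

lemma In_backward (S : Finset (Fin n)) (σ : Perm (Fin n))
    (hinv : ∀ x, σ (σ x) = x) (hfpf : ∀ x, σ x ≠ x) {a b : Fin n}
    (ha : a ∈ S) (hsa : σ a ∉ S) (hb : b ∈ S) (hsb : σ b ∉ S) (hab : a ≠ b) :
    S.filter (fun v => (swap (σ a) b * σ * swap (σ a) b) v ∈ S)
      = insert a (insert b (S.filter fun v => σ v ∈ S)) := by
  have hvu : b ≠ a := hab.symm
  have hvsu : b ≠ σ a := fun h => hsa (h ▸ hb)
  ext w
  simp only [mem_insert, mem_filter]
  by_cases hwS : w ∈ S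
  · by_cases hwa : w = a
    · subst hwa
      rw [step_u σ w b hinv hfpf hvu hvsu]
      simp [hb, hwS]
    · by_cases hwb : w = b
      · subst hwb
        rw [step_v σ a w hinv hfpf hvu hvsu]
        simp [ha, hwS]
      · have hwsa : w ≠ σ a := fun h => hsa (h ▸ hwS)
        have hwsb : w ≠ σ b := fun h => hsb (h ▸ hwS)
        rw [step_other σ a b hinv hfpf hvu hvsu w hwa hwb hwsa hwsb]
        simp [hwS, hwa, hwb]
  · have hwa : w ≠ a := fun h => hwS (h ▸ ha)
    have hwb : w ≠ b := fun h => hwS (h ▸ hb)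
    simp [hwS, hwa, hwb]

lemma key (S : Finset (Fin n)) (s : ℕ) :
    (Acnt n S (s+1)).card * (2*(s+1) * ((n + 2*(s+1)) - 2*S.card))
      = (Acnt n S s).card * ((S.card - 2*s) * (S.card - (2*s+1))) := by
  classical
  set L := (Acnt n S (s+1)).sigma
      (fun σ => (S.filter fun x => σ x ∈ S) ×ˢ (univ.filter fun y => y ∉ S ∧ σ y ∉ S)) with hL
  set R := (Acnt n S s).sigma (fun σ => (S.filter fun a => ¬ σ a ∈ S).offDiag) with hR
  have hfibL : ∀ σ ∈ Acnt n S (s+1),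
      ((S.filter fun x => σ x ∈ S) ×ˢ (univ.filter fun y => y ∉ S ∧ σ y ∉ S)).card
        = 2*(s+1) * ((n + 2*(s+1)) - 2*S.card) := by
    intro σ hσ
    obtain ⟨hpm, hc⟩ := mem_filter.mp hσ
    obtain ⟨hinv, hfpf⟩ := mem_pm.mp hpm
    rw [card_product, hc]
    have hy := Ycard S σ hinv
    rw [hc] at hy
    congr 1
    omega
  have hcardL : L.card = (Acnt n S (s+1)).card * (2*(s+1) * ((n + 2*(s+1)) - 2*S.card)) := by
    rw [hL, card_sigma, Finset.sum_congr rfl hfibL, sum_const, smul_eq_mul]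
  have hfibR : ∀ σ ∈ Acnt n S s,
      ((S.filter fun a => ¬ σ a ∈ S).offDiag).card
        = (S.card - 2*s) * (S.card - (2*s+1)) := by
    intro σ hσ
    obtain ⟨hpm, hc⟩ := mem_filter.mp hσ
    have h1 : (S.filter fun x => σ x ∈ S).card + (S.filter fun x => ¬ σ x ∈ S).card = S.card :=
      card_filter_add_card_filter_not _
    rw [offDiag_card]
    have hc2 : (S.filter fun a => ¬ σ a ∈ S).card = S.card - 2*s := by omega
    rw [hc2]
    set e := S.card - 2*s with he
    have h3 : S.card - (2*s+1) = e - 1 := by omega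
    rw [h3, Nat.mul_sub_one]
  have hcardR : R.card = (Acnt n S s).card * ((S.card - 2*s) * (S.card - (2*s+1))) := by
    rw [hR, card_sigma, Finset.sum_congr rfl hfibR, sum_const, smul_eq_mul]
  have hbij : L.card = R.card := by
    apply Finset.card_bij'
      (i := fun z (_ : z ∈ L) =>
        (⟨swap (z.1 z.2.1) z.2.2 * z.1 * swap (z.1 z.2.1) z.2.2, (z.2.1, z.1 z.2.1)⟩ :
          Σ _ : Perm (Fin n), Fin n × Fin n))
      (j := fun z (_ : z ∈ R) =>
        (⟨swap (z.1 z.2.1) z.2.2 * z.1 * swap (z.1 z.2.1) z.2.2, (z.2.1, z.1 z.2.1)⟩ :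
          Σ _ : Perm (Fin n), Fin n × Fin n))
    · -- maps L into R
      rintro ⟨σ, x, y⟩ hz
      rw [hL, mem_sigma] at hz
      obtain ⟨hA, hfib⟩ := hz
      dsimp only at hA hfib ⊢
      obtain ⟨hpm, hc⟩ := mem_filter.mp hA
      obtain ⟨hinv, hfpf⟩ := mem_pm.mp hpm
      simp only [mem_product, mem_filter, mem_univ, true_and] at hfib
      obtain ⟨⟨hx, hsx⟩, hy, hsy⟩ := hfib
      have hvu : y ≠ x := fun h => hy (h ▸ hx)
      have hvsu : y ≠ σ x := fun h => hy (h ▸ hsx)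
      rw [hR, mem_sigma]
      constructor
      · refine mem_filter.mpr ⟨step_mem σ x y hinv hfpf hvu hvsu, ?_⟩
        rw [In_forward S σ hinv hfpf hx hsx hy hsy]
        have hxm : x ∈ S.filter fun v => σ v ∈ S := mem_filter.mpr ⟨hx, hsx⟩
        have hsxm : σ x ∈ (S.filter fun v => σ v ∈ S).erase x :=
          mem_erase.mpr ⟨hfpf x, mem_filter.mpr ⟨hsx, by rw [hinv]; exact hx⟩⟩
        rw [card_erase_of_mem hsxm, card_erase_of_mem hxm, hc]
        omega
      · refine mem_offDiag.mpr ⟨mem_filter.mpr ⟨hx, ?_⟩, mem_filter.mpr ⟨hsx, ?_⟩, (hfpf x).symm⟩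
        · rw [step_u σ x y hinv hfpf hvu hvsu]; exact hy
        · rw [step_su σ x y hinv hfpf hvu hvsu]; exact hsy
    · -- maps R into L
      rintro ⟨σ, a, b⟩ hz
      rw [hR, mem_sigma] at hz
      obtain ⟨hA, hfib⟩ := hz
      dsimp only at hA hfib ⊢
      obtain ⟨hpm, hc⟩ := mem_filter.mp hA
      obtain ⟨hinv, hfpf⟩ := mem_pm.mp hpm
      rw [mem_offDiag] at hfib
      obtain ⟨ham, hbm, hab⟩ := hfib
      obtain ⟨ha, hsa⟩ := mem_filter.mp ham
      obtain ⟨hb, hsb⟩ := mem_filter.mp hbm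
      have hvu : b ≠ a := hab.symm
      have hvsu : b ≠ σ a := fun h => hsa (h ▸ hb)
      rw [hL, mem_sigma]
      constructor
      · refine mem_filter.mpr ⟨step_mem σ a b hinv hfpf hvu hvsu, ?_⟩
        rw [In_backward S σ hinv hfpf ha hsa hb hsb hab]
        have hbn : b ∉ S.filter fun v => σ v ∈ S := fun h => hsb (mem_filter.mp h).2
        have han : a ∉ insert b (S.filter fun v => σ v ∈ S) := by
          simp only [mem_insert, mem_filter]
          push_neg
          exact ⟨hab, fun _ => hsa⟩
        rw [card_insert_of_notMem han, card_insert_of_notMem hbn, hc]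
        ring
      · refine mem_product.mpr ⟨mem_filter.mpr ⟨ha, ?_⟩, mem_filter.mpr ⟨mem_univ _, hsa, ?_⟩⟩
        · rw [step_u σ a b hinv hfpf hvu hvsu]; exact hb
        · rw [step_su σ a b hinv hfpf hvu hvsu]; exact hsb
    · -- left inverse
      rintro ⟨σ, x, y⟩ hz
      rw [hL, mem_sigma] at hz
      obtain ⟨hA, hfib⟩ := hz
      dsimp only at hA hfib ⊢
      obtain ⟨hpm, hc⟩ := mem_filter.mp hA
      obtain ⟨hinv, hfpf⟩ := mem_pm.mp hpm
      simp only [mem_product, mem_filter, mem_univ, true_and] at hfib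
      obtain ⟨⟨hx, hsx⟩, hy, hsy⟩ := hfib
      have hvu : y ≠ x := fun h => hy (h ▸ hx)
      have hvsu : y ≠ σ x := fun h => hy (h ▸ hsx)
      rw [step_u σ x y hinv hfpf hvu hvsu, conj_cancel σ (σ x) y]
    · -- right inverse
      rintro ⟨σ, a, b⟩ hz
      rw [hR, mem_sigma] at hz
      obtain ⟨hA, hfib⟩ := hz
      dsimp only at hA hfib ⊢
      obtain ⟨hpm, hc⟩ := mem_filter.mp hA
      obtain ⟨hinv, hfpf⟩ := mem_pm.mp hpm
      rw [mem_offDiag] at hfib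
      obtain ⟨ham, hbm, hab⟩ := hfib
      obtain ⟨ha, hsa⟩ := mem_filter.mp ham
      obtain ⟨hb, hsb⟩ := mem_filter.mp hbm
      have hvu : b ≠ a := hab.symm
      have hvsu : b ≠ σ a := fun h => hsa (h ▸ hb)
      rw [step_u σ a b hinv hfpf hvu hvsu, conj_cancel σ (σ a) b]
  rw [← hcardL, ← hcardR, hbij]


end PMULC

open PMULC in
theorem matching_edge_count_ultra_log_concave (n : ℕ) (hn : Even n) (hn0 : 0 < n)
    (S : Finset (Fin n)) (t : ℕ) (ht : 1 ≤ t) (hsupp : 0 < pmProb n S t) :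
    pmProb n S (t - 1) * pmProb n S (t + 1) ≤
      ((t : ℝ) / (t + 1)) * (pmProb n S t) ^ 2 := by
  classical
  have hprob : ∀ s, pmProb n S s
      = ((Acnt n S s).card : ℝ) / ((perfectMatchings n).card : ℝ) := fun _ => rfl
  have hP : 0 < (perfectMatchings n).card := Finset.card_pos.mpr (pm_nonempty hn)
  have hNbpos : 0 < (Acnt n S t).card := by
    by_contra h
    push_neg at h
    have h0 : (Acnt n S t).card = 0 := by omega
    rw [hprob t, h0] at hsupp
    norm_num at hsupp
  obtain ⟨σ, hσ⟩ := Finset.card_pos.mp hNbpos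
  obtain ⟨hpm, hc⟩ := Finset.mem_filter.mp hσ
  obtain ⟨hinv, hfpf⟩ := mem_pm.mp hpm
  have hk : 2 * t ≤ S.card := by
    have := Finset.card_filter_le S (fun x => σ x ∈ S)
    omega
  have hn2k : 2 * S.card ≤ n + 2 * t := by
    have := Ycard S σ hinv
    omega
  have ht1 : t - 1 + 1 = t := by omega
  have key1 := key S (t - 1)
  rw [ht1] at key1
  have key2 := key S t
  have e2 : S.card - 2 * (t - 1) = S.card - 2 * t + 2 := by omega
  have e3 : S.card - (2 * (t - 1) + 1) = S.card - 2 * t + 1 := by omega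
  have e4 : n + 2 * (t + 1) - 2 * S.card = (n + 2 * t - 2 * S.card) + 2 := by omega
  have e5 : S.card - (2 * t + 1) = S.card - 2 * t - 1 := by omega
  rw [e2, e3] at key1
  rw [e4, e5] at key2
  set D := n + 2 * t - 2 * S.card with hD
  set e := S.card - 2 * t with he
  set Na := (Acnt n S (t - 1)).card with hNa
  set Nb := (Acnt n S t).card with hNb
  set Nc := (Acnt n S (t + 1)).card with hNc
  have natineq : (t + 1) * (Na * Nc) ≤ t * (Nb * Nb) := by
    apply Nat.le_of_mul_le_mul_left _ (show 0 < 2 * (D + 2) by omega)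
    calc 2 * (D + 2) * ((t + 1) * (Na * Nc))
        = Na * (Nc * (2 * (t + 1) * (D + 2))) := by ring
      _ = Na * (Nb * (e * (e - 1))) := by rw [key2]
      _ = Nb * (Na * (e * (e - 1))) := by ring
      _ ≤ Nb * (Na * ((e + 2) * (e + 1))) := by gcongr <;> omega
      _ = Nb * (Nb * (2 * t * D)) := by rw [← key1]
      _ = 2 * D * (t * (Nb * Nb)) := by ring
      _ ≤ 2 * (D + 2) * (t * (Nb * Nb)) := by gcongr <;> omega
  have hPr : (0 : ℝ) < ((perfectMatchings n).card : ℝ) := by exact_mod_cast hP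
  have hmain : ((t : ℝ) + 1) * ((Na : ℝ) * (Nc : ℝ)) ≤ (t : ℝ) * ((Nb : ℝ) * (Nb : ℝ)) := by
    exact_mod_cast natineq
  rw [hprob, hprob, hprob]
  rw [div_mul_div_comm, div_pow, div_mul_div_comm,
    div_le_div_iff₀ (mul_pos hPr hPr) (mul_pos (by positivity) (pow_pos hPr 2))]
  calc ((Na : ℝ) * Nc) * (((t : ℝ) + 1) * ((perfectMatchings n).card : ℝ) ^ 2)
      = (((t : ℝ) + 1) * ((Na : ℝ) * Nc)) * ((perfectMatchings n).card : ℝ) ^ 2 := by ring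
    _ ≤ ((t : ℝ) * ((Nb : ℝ) * Nb)) * ((perfectMatchings n).card : ℝ) ^ 2 :=
        mul_le_mul_of_nonneg_right hmain (by positivity)
    _ = (t : ℝ) * (Nb : ℝ) ^ 2 *
        (((perfectMatchings n).card : ℝ) * ((perfectMatchings n).card : ℝ)) := by ring
end

section
/- Let f be an r-round matching-certified algorithm, and for x ∈ F_{r-1} define Q(f,x) = Pr_{y∼R_r}[dir(f,y) = 1 | res₁(y) = x]. Then E_{x∼F_{r-1}}[Q(f,x)] ≤ 1/Δ. -/
open MeasureTheory

/-! Edge-labeled `Δ`-ary trees: `r`-neighborhoods and `r`-flowers, following the paper.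
Labels lie in `ℝ`, carrying the uniform probability measure on `[0,1]`. -/

variable (Δ : ℕ) [NeZero Δ]

/-- The recursively defined label-spaces: `Sty 0 = ℝ` (one edge label), and a member of
`Sty (r+1)` records the labels of a depth-`(r+1)` branching, one `Sty r` per child. -/
def Sty : ℕ → Type
  | 0 => ℝ
  | r + 1 => Fin (Δ - 1) → Sty r

instance styMS : ∀ r, MeasurableSpace (Sty Δ r)
  | 0 => inferInstanceAs (MeasurableSpace ℝ)
  | r + 1 => @MeasurableSpace.pi (Fin (Δ - 1)) (fun _ => Sty Δ r) (fun _ => styMS r)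

/-- The uniform probability measure on `Sty Δ r` (product of uniform measures on `[0,1]`). -/
noncomputable def styMeasP : ∀ r, {μ : Measure (Sty Δ r) // IsProbabilityMeasure μ}
  | 0 => ⟨(volume : Measure ℝ).restrict (Set.Icc 0 1), by
      constructor
      show (volume : Measure ℝ).restrict (Set.Icc 0 1) Set.univ = 1
      simp [Real.volume_Icc]⟩
  | r + 1 => by
      haveI i1 : IsProbabilityMeasure ((styMeasP r).1 : Measure (Sty Δ r)) := (styMeasP r).2
      haveI i2 : SigmaFinite ((styMeasP r).1 : Measure (Sty Δ r)) :=
        IsFiniteMeasure.toSigmaFinite _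
      refine ⟨Measure.pi fun _ : Fin (Δ - 1) => (styMeasP r).1, ?_⟩
      exact Measure.pi.instIsProbabilityMeasure _

noncomputable def styMeas (r : ℕ) : Measure (Sty Δ r) := (styMeasP Δ r).1

instance (r : ℕ) : IsProbabilityMeasure (styMeas Δ r) := (styMeasP Δ r).2

/-- `r`-flowers: a label for the center edge `{A,B}`, and for each `s ∈ [r]` a pair
(`A`-side, `B`-side) of depth-`s` labelings `w_{sA}, w_{sB} ∈ S_s`. -/
abbrev Fty (r : ℕ) : Type := Sty Δ 0 × ((s : Fin r) → Sty Δ (s + 1) × Sty Δ (s + 1))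

/-- `r`-neighborhoods: for each row `s ∈ [r]` and direction `i ∈ [Δ]` a labeling
`z_{si} ∈ S_{s-1}`. -/
abbrev Rty (r : ℕ) : Type := (s : Fin r) → Fin Δ → Sty Δ s

/-- The uniform probability measure on `r`-flowers. -/
noncomputable def fMeas (r : ℕ) : Measure (Fty Δ r) :=
  (styMeas Δ 0).prod (Measure.pi fun s : Fin r => (styMeas Δ (s + 1)).prod (styMeas Δ (s + 1)))

/-- The uniform probability measure on `r`-neighborhoods. -/
noncomputable def rMeas (r : ℕ) : Measure (Rty Δ r) :=
  Measure.pi fun s : Fin r => Measure.pi fun _ : Fin Δ => styMeas Δ s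

/-- The uniform measure on the free coordinates of an `(r+1)`-neighborhood extension
of an `r`-flower. -/
noncomputable def tMeas (r : ℕ) : Measure (Fin (Δ - 1) → Sty Δ r) :=
  Measure.pi fun _ => styMeas Δ r

/-- The `v`-side components of a flower (`true` = the `A` side, `false` = the `B` side). -/
def Fty.side {r : ℕ} (v : Bool) (w : Fty Δ r) (s : Fin r) : Sty Δ (s + 1) :=
  if v then (w.2 s).1 else (w.2 s).2

/-- `end_v(w)`: the `r`-neighborhood around the endpoint `v` of the flower `w`;
`w` is the extension of `end_v(w)` in direction `1` (index `0`). -/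
def endp {r : ℕ} (v : Bool) (w : Fty Δ r) : Rty Δ r := fun s i =>
  match s, i with
  | ⟨0, _⟩, ⟨0, _⟩ => w.1
  | ⟨k + 1, hk⟩, ⟨0, _⟩ => Fty.side Δ (!v) w ⟨k, by omega⟩
  | ⟨k, hk⟩, ⟨j + 1, hj⟩ => Fty.side Δ v w ⟨k, hk⟩ ⟨j, by omega⟩

/-- The action of a permutation of the `Δ` directions on an `r`-neighborhood:
`(σ z)_{s, σ(i)} = z_{s,i}`. -/
def permR {r : ℕ} (σ : Equiv.Perm (Fin Δ)) (z : Rty Δ r) : Rty Δ r :=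
  fun s i => z s (σ⁻¹ i)

/-- `res₁(z)`: the restriction of an `(r+1)`-neighborhood to the `r`-flower in direction `1`. -/
def res1 {r : ℕ} (z : Rty Δ (r + 1)) : Fty Δ r :=
  ⟨z ⟨0, Nat.succ_pos r⟩ (0 : Fin Δ),
   fun s => ⟨fun i => z ⟨s, by have := s.isLt; omega⟩ ⟨(i : ℕ) + 1, by have := i.isLt; omega⟩,
             z ⟨(s : ℕ) + 1, by have := s.isLt; omega⟩ (0 : Fin Δ)⟩⟩

/-- `res_i(z) := res₁(σ_i z)` where `σ_i` swaps directions `1` and `i`. -/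
def resi {r : ℕ} (z : Rty Δ (r + 1)) (i : Fin Δ) : Fty Δ r :=
  res1 Δ (permR Δ (Equiv.swap 0 i) z)

/-- The reversal of a flower: exchanges the roles of the endpoints `A` and `B`. -/
def frev {r : ℕ} (w : Fty Δ r) : Fty Δ r := ⟨w.1, fun s => ⟨(w.2 s).2, (w.2 s).1⟩⟩

/-- The `(r+1)`-neighborhood extending the `r`-flower `x` in direction `1`, with free
coordinates `t` (the labels at distance `r` to `r+1` in directions `2,…,Δ`); this realizes
the conditional distribution of `y ∼ R_{r+1}` given `res₁(y) = x`. -/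
def extend1 {r : ℕ} (x : Fty Δ r) (t : Fin (Δ - 1) → Sty Δ r) : Rty Δ (r + 1) := fun s i =>
  match s, i with
  | ⟨0, _⟩, ⟨0, _⟩ => x.1
  | ⟨k + 1, hk⟩, ⟨0, _⟩ => (x.2 ⟨k, by omega⟩).2
  | ⟨k, hk⟩, ⟨j + 1, hj⟩ =>
      if h : k < r then (x.2 ⟨k, h⟩).1 ⟨j, by omega⟩
      else cast (congrArg (Sty Δ) (by omega : r = k)) (t ⟨j, by omega⟩)

/-- Two `r`-flowers are incident if they are extensions of a common `r`-neighborhood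
in two distinct directions. -/
def Incident {r : ℕ} (w w' : Fty Δ r) : Prop :=
  ∃ (v v' : Bool) (σ : Equiv.Perm (Fin Δ)),
    endp Δ v w = permR Δ σ (endp Δ v' w') ∧ σ 0 ≠ 0

/-- An `r`-round matching-certified algorithm: a measurable `f : F_r → {0,1}` never
accepting two incident flowers. -/
def MatchingCertified {r : ℕ} (f : Fty Δ r → Bool) : Prop :=
  Measurable f ∧ ∀ w w' : Fty Δ r, Incident Δ w w' → ¬(f w = true ∧ f w' = true)

/-- The vertex survival probability `P_f`: the probability over a uniform
`(r+1)`-neighborhood that none of the `Δ` incident `r`-flowers is accepted. -/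
noncomputable def survP {r : ℕ} (f : Fty Δ r → Bool) : ℝ :=
  (rMeas Δ (r + 1) {z | ∀ i : Fin Δ, f (resi Δ z i) = false}).toReal

open Classical in
/-- `dir(f,y)`: the direction `i` (if any) such that some flower extension of `y`
in direction `i` is accepted by `f`; `none` encodes the value `0`. -/
noncomputable def dir {r : ℕ} (f : Fty Δ r → Bool) (y : Rty Δ r) : Option (Fin Δ) :=
  if h : ∃ i : Fin Δ, ∃ w : Fty Δ r, f w = true ∧ endp Δ true w = permR Δ (Equiv.swap 0 i) y
  then some h.choose else none

/-- `Q(f,x)`: the probability that a uniform `(r+1)`-neighborhood extension `y` of the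
`r`-flower `x` (conditioned on `res₁(y) = x`) has `dir(f,y) = 1`. -/
noncomputable def Qdir {r : ℕ} (f : Fty Δ (r + 1) → Bool) (x : Fty Δ r) : ℝ :=
  (tMeas Δ r {t | dir Δ f (extend1 Δ x t) = some (0 : Fin Δ)}).toReal

/-- The set `X_r(f,δ)` of `δ`-good `r`-flowers. -/
def Xgood {r : ℕ} (f : Fty Δ (r + 1) → Bool) (δ : ℝ) : Set (Fty Δ r) :=
  {x | 1 - δ ≤ Qdir Δ f x ∧ 1 - δ ≤ Qdir Δ f (frev Δ x)}

/-- The `m`-flower extending an `m`-neighborhood `z` in direction `1` with free coordinate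
`u ∈ S_m` (the `B`-side labels at depth `m`); realizes the conditional distribution of
`y ∼ F_m` given `end_A(y) = z`. -/
def extEnd : {m : ℕ} → Rty Δ m → Sty Δ m → Fty Δ m
  | 0, _, u => ⟨u, fun s => Fin.elim0 s⟩
  | m + 1, z, u =>
      ⟨z ⟨0, Nat.succ_pos m⟩ (0 : Fin Δ),
       fun s =>
        ⟨fun i => z ⟨s, s.isLt⟩ ⟨(i : ℕ) + 1, by have := i.isLt; omega⟩,
         if h : (s : ℕ) + 1 < m + 1 then z ⟨(s : ℕ) + 1, h⟩ (0 : Fin Δ)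
         else cast (congrArg (Sty Δ) (by have := s.isLt; omega : m + 1 = (s : ℕ) + 1)) u⟩⟩

/-- `P_i(f,x,δ)`: the probability that a uniform `m`-flower extension of the
`m`-neighborhood `x` in direction `i` is `δ`-good. -/
noncomputable def dirP {m : ℕ} (f : Fty Δ (m + 1) → Bool) (x : Rty Δ m) (i : Fin Δ)
    (δ : ℝ) : ℝ :=
  (styMeas Δ m {u | extEnd Δ (permR Δ (Equiv.swap 0 i) x) u ∈ Xgood Δ f δ}).toReal

/-- `P_comp(f,x,δ) = P(f,x,δ) - P_max(f,x,δ)`. -/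
noncomputable def Pcomp {m : ℕ} (f : Fty Δ (m + 1) → Bool) (x : Rty Δ m) (δ : ℝ) : ℝ :=
  (∑ i : Fin Δ, dirP Δ f x i δ) - ⨆ i : Fin Δ, dirP Δ f x i δ
set_option linter.unusedSectionVars false

instance styTop : ∀ r, TopologicalSpace (Sty Δ r)
  | 0 => inferInstanceAs (TopologicalSpace ℝ)
  | r + 1 => @Pi.topologicalSpace (Fin (Δ - 1)) (fun _ => Sty Δ r) (fun _ => styTop r)

instance styPolish : ∀ r, PolishSpace (Sty Δ r)
  | 0 => inferInstanceAs (PolishSpace ℝ)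
  | r + 1 => letI := styPolish r; inferInstanceAs (PolishSpace (Fin (Δ - 1) → Sty Δ r))

instance styBorel : ∀ r, BorelSpace (Sty Δ r)
  | 0 => inferInstanceAs (BorelSpace ℝ)
  | r + 1 => letI := styPolish Δ r; letI := styBorel r
      inferInstanceAs (BorelSpace (Fin (Δ - 1) → Sty Δ r))

example (r : ℕ) : StandardBorelSpace (Fty Δ (r+1)) := inferInstance
example (r : ℕ) : PolishSpace (Rty Δ (r+1)) := inferInstance
example (r : ℕ) : BorelSpace (Rty Δ (r+1)) := inferInstance

theorem permR_permR {r : ℕ} (σ τ : Equiv.Perm (Fin Δ)) (z : Rty Δ r) :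
    permR Δ σ (permR Δ τ z) = permR Δ (σ * τ) z := by
  funext s i; simp [permR, Equiv.Perm.mul_apply]

theorem permR_one {r : ℕ} (z : Rty Δ r) : permR Δ 1 z = z := by
  funext s i; simp [permR]

theorem measurable_permR {r : ℕ} (σ : Equiv.Perm (Fin Δ)) :
    Measurable (permR Δ (r := r) σ) := by
  apply measurable_pi_lambda; intro s
  apply measurable_pi_lambda; intro i
  exact (measurable_pi_apply _).comp (measurable_pi_apply s)

theorem measurable_side {r : ℕ} (v : Bool) (s : Fin r) :
    Measurable (fun w : Fty Δ r => Fty.side Δ v w s) := by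
  unfold Fty.side
  cases v
  · simp only [Bool.false_eq_true, if_false]
    exact ((measurable_pi_apply s).comp measurable_snd).snd
  · simp only [if_true]
    exact ((measurable_pi_apply s).comp measurable_snd).fst

theorem measurable_endp {r : ℕ} (v : Bool) : Measurable (endp Δ (r := r) v) := by
  apply measurable_pi_lambda; intro s
  apply measurable_pi_lambda; intro i
  rcases s with ⟨s, hs⟩
  rcases i with ⟨i, hi⟩
  match s, i with
  | 0, 0 => exact measurable_fst
  | k+1, 0 =>
      exact measurable_side Δ (!v) ⟨k, by omega⟩
  | 0, j+1 =>
      exact (measurable_pi_apply _).comp (measurable_side Δ v ⟨0, hs⟩)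
  | k+1, j+1 =>
      exact (measurable_pi_apply _).comp (measurable_side Δ v ⟨k+1, hs⟩)
theorem measurePreserving_comp_perm {β : Type*} [MeasurableSpace β] (μ : Measure β)
    [SigmaFinite μ] (σ : Equiv.Perm (Fin Δ)) :
    MeasurePreserving (fun (g : Fin Δ → β) (i : Fin Δ) => g (σ⁻¹ i))
      (Measure.pi fun _ => μ) (Measure.pi fun _ => μ) := by
  have h := measurePreserving_piCongrLeft (fun _ : Fin Δ => μ) σ
  have he : ⇑(MeasurableEquiv.piCongrLeft (fun _ : Fin Δ => β) σ)
      = fun (g : Fin Δ → β) (i : Fin Δ) => g (σ⁻¹ i) := by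
    funext g i
    rw [MeasurableEquiv.coe_piCongrLeft]
    conv_lhs => rw [show i = σ (σ⁻¹ i) by simp]
    rw [Equiv.piCongrLeft_apply_apply]
  rwa [he] at h

theorem measurePreserving_permR {r : ℕ} (σ : Equiv.Perm (Fin Δ)) :
    MeasurePreserving (permR Δ (r := r) σ) (rMeas Δ r) (rMeas Δ r) := by
  have h := measurePreserving_pi (fun s : Fin r => Measure.pi fun _ : Fin Δ => styMeas Δ s)
    (fun s : Fin r => Measure.pi fun _ : Fin Δ => styMeas Δ s)
    (f := fun (s : Fin r) (g : Fin Δ → Sty Δ s) (i : Fin Δ) => g (σ⁻¹ i))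
    (fun s => measurePreserving_comp_perm Δ (styMeas Δ s) σ)
  exact h
section SnocE
variable {n : ℕ} (κ : Fin (n + 1) → Type*) [∀ s, MeasurableSpace (κ s)]

/-- Measurable equiv building a `Fin (n+1)`-pi from its first `n` coordinates and last one. -/
noncomputable def piSnocE :
    ((∀ s : Fin n, κ (Fin.castAdd 1 s)) × κ (Fin.natAdd n (0 : Fin 1))) ≃ᵐ (∀ s, κ s) :=
  ((MeasurableEquiv.prodCongr (MeasurableEquiv.refl _)
      (MeasurableEquiv.piUnique (fun j : Fin 1 => κ (finSumFinEquiv (Sum.inr j)))).symm).trans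
    (MeasurableEquiv.sumPiEquivProdPi (fun q => κ (finSumFinEquiv q))).symm).trans
    (MeasurableEquiv.piCongrLeft κ finSumFinEquiv)

theorem piSnocE_castAdd (c : ∀ s : Fin n, κ (Fin.castAdd 1 s)) (v : κ (Fin.natAdd n (0 : Fin 1)))
    (s : Fin n) : piSnocE κ (c, v) (Fin.castAdd 1 s) = c s := by
  show (MeasurableEquiv.piCongrLeft κ finSumFinEquiv)
    ((MeasurableEquiv.sumPiEquivProdPi (fun q => κ (finSumFinEquiv q))).symm
      (c, (MeasurableEquiv.piUnique (fun j : Fin 1 => κ (finSumFinEquiv (Sum.inr j)))).symm v))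
      (Fin.castAdd 1 s) = c s
  show (MeasurableEquiv.piCongrLeft κ finSumFinEquiv)
    ((MeasurableEquiv.sumPiEquivProdPi (fun q => κ (finSumFinEquiv q))).symm
      (c, (MeasurableEquiv.piUnique (fun j : Fin 1 => κ (finSumFinEquiv (Sum.inr j)))).symm v))
      (finSumFinEquiv (Sum.inl s)) = c s
  exact Equiv.piCongrLeft_sumInl κ finSumFinEquiv c _ s

theorem piSnocE_natAdd (c : ∀ s : Fin n, κ (Fin.castAdd 1 s)) (v : κ (Fin.natAdd n (0 : Fin 1))) :
    piSnocE κ (c, v) (Fin.natAdd n (0 : Fin 1)) = v := by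
  show (MeasurableEquiv.piCongrLeft κ finSumFinEquiv)
    ((MeasurableEquiv.sumPiEquivProdPi (fun q => κ (finSumFinEquiv q))).symm
      (c, (MeasurableEquiv.piUnique (fun j : Fin 1 => κ (finSumFinEquiv (Sum.inr j)))).symm v))
      (Fin.natAdd n (0 : Fin 1)) = v
  show (MeasurableEquiv.piCongrLeft κ finSumFinEquiv)
    ((MeasurableEquiv.sumPiEquivProdPi (fun q => κ (finSumFinEquiv q))).symm
      (c, (MeasurableEquiv.piUnique (fun j : Fin 1 => κ (finSumFinEquiv (Sum.inr j)))).symm v))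
      (finSumFinEquiv (Sum.inr (0 : Fin 1))) = v
  have h := Equiv.piCongrLeft_sumInr κ finSumFinEquiv c
    (uniqueElim (α := fun j : Fin 1 => κ (finSumFinEquiv (Sum.inr j))) v) 0
  exact h.trans (uniqueElim_default (α := fun j : Fin 1 => κ (finSumFinEquiv (Sum.inr j))) v)

theorem piSnocE_symm_apply (c : ∀ s, κ s) :
    (piSnocE κ).symm c
      = (fun s : Fin n => c (Fin.castAdd 1 s), c (Fin.natAdd n (0 : Fin 1))) := by
  have key : piSnocE κ (fun s : Fin n => c (Fin.castAdd 1 s), c (Fin.natAdd n (0 : Fin 1))) = c := by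
    funext s
    obtain ⟨q, rfl⟩ : ∃ q, finSumFinEquiv q = s :=
      ⟨finSumFinEquiv.symm s, Equiv.apply_symm_apply _ _⟩
    cases q with
    | inl k =>
        rw [finSumFinEquiv_apply_left, piSnocE_castAdd]
    | inr j =>
        have hj : j = 0 := Subsingleton.elim _ _
        subst hj
        rw [finSumFinEquiv_apply_right, piSnocE_natAdd]
  conv_lhs => rw [← key]
  rw [MeasurableEquiv.symm_apply_apply]

theorem measurePreserving_piSnocE (μ : ∀ s, Measure (κ s)) [∀ s, SigmaFinite (μ s)] :
    MeasurePreserving (piSnocE κ)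
      ((Measure.pi fun s : Fin n => μ (Fin.castAdd 1 s)).prod (μ (Fin.natAdd n (0 : Fin 1))))
      (Measure.pi μ) := by
  have h1 : MeasurePreserving
      (MeasurableEquiv.prodCongr (MeasurableEquiv.refl _)
        (MeasurableEquiv.piUnique (fun j : Fin 1 => κ (finSumFinEquiv (Sum.inr j)))).symm)
      ((Measure.pi fun s : Fin n => μ (Fin.castAdd 1 s)).prod (μ (Fin.natAdd n (0 : Fin 1))))
      ((Measure.pi fun s : Fin n => μ (finSumFinEquiv (Sum.inl s))).prod
        (Measure.pi fun j : Fin 1 => μ (finSumFinEquiv (Sum.inr j)))) :=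
    MeasurePreserving.prod (μc := μ (Fin.natAdd n (0 : Fin 1))) (MeasurePreserving.id _)
      ((measurePreserving_piUnique (fun j : Fin 1 => μ (finSumFinEquiv (Sum.inr j)))).symm _)
  have h2 := measurePreserving_sumPiEquivProdPi_symm (fun q => μ (finSumFinEquiv q))
  have h3 := measurePreserving_piCongrLeft μ finSumFinEquiv
  have h := h3.comp (h2.comp h1)
  refine ⟨(piSnocE κ).measurable, ?_⟩
  have key : Measure.map (⇑(piSnocE κ))
      ((Measure.pi fun s : Fin n => μ (Fin.castAdd 1 s)).prod (μ (Fin.natAdd n (0 : Fin 1))))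
      = Measure.map (⇑(MeasurableEquiv.piCongrLeft κ finSumFinEquiv) ∘
        (⇑(MeasurableEquiv.sumPiEquivProdPi (fun q => κ (finSumFinEquiv q))).symm ∘
          ⇑(MeasurableEquiv.prodCongr (MeasurableEquiv.refl _)
            (MeasurableEquiv.piUnique (fun j : Fin 1 =>
              κ (finSumFinEquiv (Sum.inr j)))).symm)))
      ((Measure.pi fun s : Fin n => μ (Fin.castAdd 1 s)).prod (μ (Fin.natAdd n (0 : Fin 1)))) := by
    apply congrArg (fun f => Measure.map f _)
    funext p
    simp [piSnocE, MeasurableEquiv.coe_trans, Function.comp]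
    rfl
  rw [key]
  exact h.map_eq

end SnocE
/-- Build a row `Fin Δ → β` from the head and tail. -/
def rowBuild {β : Type*} (q : β × (Fin (Δ - 1) → β)) (i : Fin Δ) : β :=
  match i with
  | ⟨0, _⟩ => q.1
  | ⟨j + 1, h⟩ => q.2 ⟨j, by omega⟩

theorem measurePreserving_rowBuild {β : Type*} [MeasurableSpace β] (μ : Measure β)
    [SigmaFinite μ] :
    MeasurePreserving (rowBuild Δ (β := β))
      (μ.prod (Measure.pi fun _ : Fin (Δ - 1) => μ)) (Measure.pi fun _ : Fin Δ => μ) := by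
  obtain ⟨n, rfl⟩ : ∃ n, Δ = n + 1 := ⟨Δ - 1, (Nat.succ_pred_eq_of_pos (NeZero.pos Δ)).symm⟩
  have h := (measurePreserving_piFinSuccAbove (fun _ : Fin (n + 1) => μ) 0).symm
    (MeasurableEquiv.piFinSuccAbove (fun _ : Fin (n + 1) => β) 0)
  have he : ⇑(MeasurableEquiv.piFinSuccAbove (fun _ : Fin (n + 1) => β) 0).symm
      = rowBuild (n + 1) (β := β) := by
    funext q i
    show Fin.insertNth (α := fun _ : Fin (n+1) => β) (0 : Fin (n+1)) q.1 q.2 i = rowBuild (n + 1) q i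
    rw [Fin.insertNth_zero]
    rcases i with ⟨iv, hi⟩
    cases iv with
    | zero => rw [show (⟨0, hi⟩ : Fin (n+1)) = 0 from rfl, Fin.cons_zero]; rfl
    | succ j =>
        rw [show (⟨j + 1, hi⟩ : Fin (n+1)) = Fin.succ ⟨j, by omega⟩ from rfl, Fin.cons_succ]
        rfl
  rwa [he] at h
theorem extend1_mk_zero {r : ℕ} (x : Fty Δ r) (t : Fin (Δ - 1) → Sty Δ r)
    (hk : 0 < r + 1) (hi : 0 < Δ) :
    extend1 Δ x t ⟨0, hk⟩ ⟨0, hi⟩ = x.1 := rfl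

theorem extend1_mk_succ_zero {r : ℕ} (x : Fty Δ r) (t : Fin (Δ - 1) → Sty Δ r)
    (kv : ℕ) (hk : kv + 1 < r + 1) (hi : 0 < Δ) :
    extend1 Δ x t ⟨kv + 1, hk⟩ ⟨0, hi⟩ = (x.2 ⟨kv, by omega⟩).2 := rfl

theorem extend1_mk {r : ℕ} (x : Fty Δ r) (t : Fin (Δ - 1) → Sty Δ r)
    (kv iv : ℕ) (hk : kv < r + 1) (hi : iv + 1 < Δ) :
    extend1 Δ x t ⟨kv, hk⟩ ⟨iv + 1, hi⟩
      = if h : kv < r then (x.2 ⟨kv, h⟩).1 ⟨iv, by omega⟩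
        else cast (congrArg (Sty Δ) (by omega : r = kv)) (t ⟨iv, by omega⟩) := by
  cases kv with
  | zero => rfl
  | succ kv => rfl

theorem extend1_castAdd {m : ℕ} (x : Fty Δ (m + 1)) (t : Fin (Δ - 1) → Sty Δ (m + 1))
    (k : Fin (m + 1)) (i : Fin Δ) :
    extend1 Δ (x.1, fun s : Fin m => x.2 (Fin.castAdd 1 s))
        ((x.2 (Fin.natAdd m (0 : Fin 1))).1) k i
      = extend1 Δ x t (Fin.castAdd 1 k) i := by
  rcases k with ⟨kv, hk⟩
  rcases i with ⟨iv, hi⟩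
  cases iv with
  | zero =>
      cases kv with
      | zero => rfl
      | succ kv2 => rfl
  | succ iv =>
      show extend1 Δ (x.1, fun s : Fin m => x.2 (Fin.castAdd 1 s))
          ((x.2 (Fin.natAdd m (0 : Fin 1))).1) ⟨kv, hk⟩ ⟨iv + 1, hi⟩
        = extend1 Δ x t ⟨kv, by omega⟩ ⟨iv + 1, hi⟩
      erw [extend1_mk, extend1_mk]
      rw [dif_pos (show kv < m + 1 by omega)]
      by_cases hkm : kv < m
      · rw [dif_pos hkm]; rfl
      · rw [dif_neg hkm]
        have hkv : kv = m := by omega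
        subst hkv
        exact eq_of_heq (cast_heq _ _)
instance fMeasProb (r : ℕ) : IsProbabilityMeasure (fMeas Δ r) := by
  unfold fMeas; infer_instance

instance rMeasProb (r : ℕ) : IsProbabilityMeasure (rMeas Δ r) := by
  unfold rMeas; infer_instance

instance tMeasProb (r : ℕ) : IsProbabilityMeasure (tMeas Δ r) := by
  unfold tMeas; infer_instance

theorem measurePreserving_extend1 : ∀ m : ℕ, MeasurePreserving
    (fun p : Fty Δ m × (Fin (Δ - 1) → Sty Δ m) => extend1 Δ p.1 p.2)
    ((fMeas Δ m).prod (tMeas Δ m)) (rMeas Δ (m + 1))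
  | 0 => by
      have c1 : MeasurePreserving (fun p : Fty Δ 0 × (Fin (Δ - 1) → Sty Δ 0) => (p.1.1, p.2))
          ((fMeas Δ 0).prod (tMeas Δ 0)) ((styMeas Δ 0).prod (tMeas Δ 0)) := by
        refine MeasurePreserving.prod (μa := fMeas Δ 0) (μc := tMeas Δ 0) ?_ (.id _)
        exact ⟨measurable_fst, Measure.fst_prod⟩
      have c2 := measurePreserving_rowBuild Δ (styMeas Δ 0)
      have hdirac : (Measure.pi fun s : Fin 0 =>
          Measure.pi fun _ : Fin Δ => styMeas Δ s)
            = Measure.dirac (fun s : Fin 0 => (s.elim0 : Fin Δ → Sty Δ s)) :=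
        Measure.pi_of_empty _ _
      have c3 : MeasurePreserving
          (fun v : Fin Δ → Sty Δ 0 => ((fun s : Fin 0 => (s.elim0 : Fin Δ → Sty Δ s)), v))
          (Measure.pi fun _ : Fin Δ => styMeas Δ 0)
          ((Measure.pi fun s : Fin 0 => Measure.pi fun _ : Fin Δ => styMeas Δ s).prod
            (Measure.pi fun _ : Fin Δ => styMeas Δ 0)) := by
        refine ⟨measurable_const.prodMk measurable_id, ?_⟩
        rw [hdirac, Measure.dirac_prod]
      have c4 := measurePreserving_piSnocE (fun s : Fin 1 => Fin Δ → Sty Δ s)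
        (fun s : Fin 1 => Measure.pi fun _ : Fin Δ => styMeas Δ s)
      have h := (c4.comp (c3.comp (c2.comp c1)))
      have he : (⇑(piSnocE (fun s : Fin 1 => Fin Δ → Sty Δ s)) ∘
          ((fun v : Fin Δ → Sty Δ 0 => ((fun s : Fin 0 => (s.elim0 : Fin Δ → Sty Δ s)), v)) ∘
            (rowBuild Δ ∘
            (fun p : Fty Δ 0 × (Fin (Δ - 1) → Sty Δ 0) => (p.1.1, p.2)))))
          = fun p : Fty Δ 0 × (Fin (Δ - 1) → Sty Δ 0) => extend1 Δ p.1 p.2 := by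
        funext p
        funext s i
        have hs : s = Fin.natAdd 0 (0 : Fin 1) := by
          apply Fin.ext
          have := s.isLt
          simp only [Fin.natAdd, Fin.coe_ofNat_eq_mod]
          omega
        rw [hs]
        show piSnocE (fun s : Fin 1 => Fin Δ → Sty Δ s)
          ((fun s : Fin 0 => (s.elim0 : Fin Δ → Sty Δ s)), rowBuild Δ (p.1.1, p.2))
          (Fin.natAdd 0 (0 : Fin 1)) i = _
        rw [piSnocE_natAdd]
        rcases i with ⟨iv, hi⟩
        cases iv with
        | zero => rfl
        | succ j =>
            show p.2 ⟨j, by omega⟩ = extend1 Δ p.1 p.2 ⟨0, Nat.one_pos⟩ ⟨j + 1, hi⟩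
            rw [extend1_mk]
            rw [dif_neg (by omega)]
            exact (eq_of_heq (cast_heq _ _)).symm
      rwa [he] at h
  | m + 1 => by
      have ih := measurePreserving_extend1 m
      have hA1 : MeasurePreserving (Prod.map (id : Sty Δ 0 → Sty Δ 0)
            ⇑(piSnocE (fun s : Fin (m + 1) =>
              Sty Δ ((s : ℕ) + 1) × Sty Δ ((s : ℕ) + 1))).symm)
          (fMeas Δ (m + 1))
          ((styMeas Δ 0).prod
            ((Measure.pi fun s : Fin m =>
                (styMeas Δ ((s : ℕ) + 1)).prod (styMeas Δ ((s : ℕ) + 1))).prod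
              ((styMeas Δ (m + 1)).prod (styMeas Δ (m + 1))))) :=
        (MeasurePreserving.id _).prod
          ((measurePreserving_piSnocE _
            (fun s : Fin (m + 1) =>
              (styMeas Δ ((s : ℕ) + 1)).prod (styMeas Δ ((s : ℕ) + 1)))).symm _)
      have hA2 : MeasurePreserving
          (fun q : Sty Δ 0 × (((s : Fin m) → Sty Δ ((s : ℕ) + 1) × Sty Δ ((s : ℕ) + 1)) ×
              (Sty Δ (m + 1) × Sty Δ (m + 1))) => ((q.1, q.2.1), q.2.2))
          ((styMeas Δ 0).prod
            ((Measure.pi fun s : Fin m =>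
                (styMeas Δ ((s : ℕ) + 1)).prod (styMeas Δ ((s : ℕ) + 1))).prod
              ((styMeas Δ (m + 1)).prod (styMeas Δ (m + 1)))))
          ((fMeas Δ m).prod ((styMeas Δ (m + 1)).prod (styMeas Δ (m + 1)))) :=
        (measurePreserving_prodAssoc _ _ _).symm MeasurableEquiv.prodAssoc
      have h1 := (hA2.comp hA1).prod
        (MeasurePreserving.id (tMeas Δ (m + 1)))
      have ha : MeasurePreserving
          (fun q : (Fty Δ m × (Sty Δ (m + 1) × Sty Δ (m + 1))) ×
              (Fin (Δ - 1) → Sty Δ (m + 1)) => (q.1.1, (q.1.2, q.2)))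
          (((fMeas Δ m).prod ((styMeas Δ (m + 1)).prod (styMeas Δ (m + 1)))).prod
            (tMeas Δ (m + 1)))
          ((fMeas Δ m).prod (((styMeas Δ (m + 1)).prod (styMeas Δ (m + 1))).prod
            (tMeas Δ (m + 1)))) :=
        measurePreserving_prodAssoc _ _ _
      have hb : MeasurePreserving
          (Prod.map (id : Fty Δ m → Fty Δ m)
            (fun q : (Sty Δ (m + 1) × Sty Δ (m + 1)) × (Fin (Δ - 1) → Sty Δ (m + 1)) =>
              (q.1.1, (q.1.2, q.2))))
          ((fMeas Δ m).prod (((styMeas Δ (m + 1)).prod (styMeas Δ (m + 1))).prod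
            (tMeas Δ (m + 1))))
          ((fMeas Δ m).prod ((styMeas Δ (m + 1)).prod
            ((styMeas Δ (m + 1)).prod (tMeas Δ (m + 1))))) :=
        (MeasurePreserving.id _).prod (measurePreserving_prodAssoc _ _ _)
      have hc : MeasurePreserving
          (fun q : Fty Δ m × (Sty Δ (m + 1) ×
              (Sty Δ (m + 1) × (Fin (Δ - 1) → Sty Δ (m + 1)))) => ((q.1, q.2.1), q.2.2))
          ((fMeas Δ m).prod ((styMeas Δ (m + 1)).prod
            ((styMeas Δ (m + 1)).prod (tMeas Δ (m + 1)))))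
          (((fMeas Δ m).prod (styMeas Δ (m + 1))).prod
            ((styMeas Δ (m + 1)).prod (tMeas Δ (m + 1)))) :=
        (measurePreserving_prodAssoc _ _ _).symm MeasurableEquiv.prodAssoc
      have h3 : MeasurePreserving
          (Prod.map (fun p : Fty Δ m × (Fin (Δ - 1) → Sty Δ m) => extend1 Δ p.1 p.2)
            (rowBuild Δ))
          (((fMeas Δ m).prod (tMeas Δ m)).prod
            ((styMeas Δ (m + 1)).prod (tMeas Δ (m + 1))))
          ((rMeas Δ (m + 1)).prod (Measure.pi fun _ : Fin Δ => styMeas Δ (m + 1))) :=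
        ih.prod (measurePreserving_rowBuild Δ (styMeas Δ (m + 1)))
      have h4 := measurePreserving_piSnocE (fun s : Fin (m + 2) => Fin Δ → Sty Δ s)
        (fun s : Fin (m + 2) => Measure.pi fun _ : Fin Δ => styMeas Δ s)
      have hcomp : MeasurePreserving
          (fun p : Fty Δ (m + 1) × (Fin (Δ - 1) → Sty Δ (m + 1)) =>
            piSnocE (fun s : Fin (m + 2) => Fin Δ → Sty Δ s)
              (extend1 Δ
                (p.1.1, ((piSnocE (fun s : Fin (m + 1) =>
                  Sty Δ ((s : ℕ) + 1) × Sty Δ ((s : ℕ) + 1))).symm p.1.2).1)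
                (((piSnocE (fun s : Fin (m + 1) =>
                  Sty Δ ((s : ℕ) + 1) × Sty Δ ((s : ℕ) + 1))).symm p.1.2).2.1),
               rowBuild Δ ((((piSnocE (fun s : Fin (m + 1) =>
                  Sty Δ ((s : ℕ) + 1) × Sty Δ ((s : ℕ) + 1))).symm p.1.2).2.2), p.2)))
          ((fMeas Δ (m + 1)).prod (tMeas Δ (m + 1))) (rMeas Δ (m + 2)) :=
        h4.comp (h3.comp (hc.comp (hb.comp (ha.comp h1))))
      have he : (fun p : Fty Δ (m + 1) × (Fin (Δ - 1) → Sty Δ (m + 1)) =>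
            piSnocE (fun s : Fin (m + 2) => Fin Δ → Sty Δ s)
              (extend1 Δ
                (p.1.1, ((piSnocE (fun s : Fin (m + 1) =>
                  Sty Δ ((s : ℕ) + 1) × Sty Δ ((s : ℕ) + 1))).symm p.1.2).1)
                (((piSnocE (fun s : Fin (m + 1) =>
                  Sty Δ ((s : ℕ) + 1) × Sty Δ ((s : ℕ) + 1))).symm p.1.2).2.1),
               rowBuild Δ ((((piSnocE (fun s : Fin (m + 1) =>
                  Sty Δ ((s : ℕ) + 1) × Sty Δ ((s : ℕ) + 1))).symm p.1.2).2.2), p.2)))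
          = fun p : Fty Δ (m + 1) × (Fin (Δ - 1) → Sty Δ (m + 1)) => extend1 Δ p.1 p.2 := by
        funext p
        obtain ⟨x, t⟩ := p
        rw [piSnocE_symm_apply]
        funext s i
        obtain ⟨q, rfl⟩ : ∃ q, finSumFinEquiv q = s :=
          ⟨finSumFinEquiv.symm s, Equiv.apply_symm_apply _ _⟩
        cases q with
        | inl k =>
            rw [finSumFinEquiv_apply_left, piSnocE_castAdd]
            exact extend1_castAdd Δ x t k i
        | inr j =>
            have hj : j = 0 := Subsingleton.elim _ _
            subst hj
            rw [finSumFinEquiv_apply_right, piSnocE_natAdd]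
            show rowBuild Δ ((x.2 (Fin.natAdd m (0 : Fin 1))).2, t) i
              = extend1 Δ x t ⟨m + 1, by omega⟩ i
            rcases i with ⟨iv, hi⟩
            cases iv with
            | zero => rfl
            | succ iv =>
                rw [extend1_mk]
                rw [dif_neg (by omega)]
                exact (eq_of_heq (cast_heq _ _)).symm
      rwa [he] at hcomp
theorem exists_measurable_separation (hΔ : 2 ≤ Δ) {X : Type*} [TopologicalSpace X] [T2Space X]
    [MeasurableSpace X] [OpensMeasurableSpace X] (A : Fin Δ → Set X)
    (hA : ∀ i, MeasureTheory.AnalyticSet (A i)) (hd : Pairwise (Function.onFun Disjoint A)) :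
    ∃ U : Fin Δ → Set X, (∀ i, MeasurableSet (U i)) ∧ (∀ i, A i ⊆ U i) ∧
      Pairwise (Function.onFun Disjoint U) := by
  have hne : ∀ i : Fin Δ, Nonempty {j : Fin Δ // j ≠ i} := by
    intro i
    rcases eq_or_ne i ⟨0, by omega⟩ with h | h
    · exact ⟨⟨⟨1, by omega⟩, by rw [h]; intro hc; exact absurd (congrArg Fin.val hc) (by simp)⟩⟩
    · exact ⟨⟨⟨0, by omega⟩, fun hc => h (by rw [← hc])⟩⟩
  have hsep : ∀ i : Fin Δ, MeasureTheory.MeasurablySeparable (A i)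
      (⋃ j : {j : Fin Δ // j ≠ i}, A j) := by
    intro i
    haveI := hne i
    refine (hA i).measurablySeparable (MeasureTheory.AnalyticSet.iUnion fun j => hA j) ?_
    rw [Set.disjoint_iUnion_right]
    exact fun j => hd (Ne.symm j.2)
  choose u hsub hdisj hmeas using hsep
  refine ⟨fun i => u i \ ⋃ j : {j : Fin Δ // j ≠ i}, u j, ?_, ?_, ?_⟩
  · intro i
    exact (hmeas i).diff (MeasurableSet.iUnion fun j => hmeas j)
  · intro i y hy
    refine ⟨hsub i hy, ?_⟩
    intro hmem
    rcases Set.mem_iUnion.1 hmem with ⟨j, hj⟩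
    -- y ∈ A i and y ∈ u j with j ≠ i; but A i ⊆ ⋃ k ≠ j, A k which is disjoint from u j
    have : y ∈ ⋃ k : {k : Fin Δ // k ≠ (j : Fin Δ)}, A k :=
      Set.mem_iUnion.2 ⟨⟨i, Ne.symm j.2⟩, hy⟩
    exact (hdisj (j : Fin Δ)).le_bot ⟨this, hj⟩
  · intro i j hij
    simp only [Function.onFun]
    rw [Set.disjoint_left]
    rintro y ⟨hyi, hyni⟩ ⟨hyj, -⟩
    exact hyni (Set.mem_iUnion.2 ⟨⟨j, Ne.symm hij⟩, hyj⟩)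
def Eset {r : ℕ} (f : Fty Δ (r + 1) → Bool) (i : Fin Δ) : Set (Rty Δ (r + 1)) :=
  {y | ∃ w, f w = true ∧ endp Δ true w = permR Δ (Equiv.swap 0 i) y}

theorem permR_swap_cancel {r : ℕ} (i : Fin Δ) (y : Rty Δ r) :
    permR Δ (Equiv.swap 0 i) (permR Δ (Equiv.swap 0 i) y) = y := by
  rw [permR_permR, Equiv.swap_mul_self]
  exact permR_one Δ y

theorem Eset_eq_image {r : ℕ} (f : Fty Δ (r + 1) → Bool) (i : Fin Δ) :
    Eset Δ f i
      = (fun w => permR Δ (Equiv.swap 0 i) (endp Δ true w)) '' {w | f w = true} := by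
  ext y
  constructor
  · rintro ⟨w, fw, hw⟩
    refine ⟨w, fw, ?_⟩
    show permR Δ (Equiv.swap 0 i) (endp Δ true w) = y
    rw [hw]; exact permR_swap_cancel Δ i y
  · rintro ⟨w, fw, hw⟩
    refine ⟨w, fw, ?_⟩
    rw [← hw, permR_swap_cancel]

theorem analyticSet_Eset {r : ℕ} {f : Fty Δ (r + 1) → Bool} (hfm : Measurable f) (i : Fin Δ) :
    MeasureTheory.AnalyticSet (Eset Δ f i) := by
  rw [Eset_eq_image]
  exact MeasurableSet.analyticSet_image (hfm (measurableSet_singleton true))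
    ((measurable_permR Δ _).comp (measurable_endp Δ true))

theorem Eset_disjoint {r : ℕ} {f : Fty Δ (r + 1) → Bool} (hf : MatchingCertified Δ f) :
    Pairwise (Function.onFun Disjoint (Eset Δ f)) := by
  intro i j hij
  simp only [Function.onFun]
  rw [Set.disjoint_left]
  rintro y ⟨wi, fwi, hwi⟩ ⟨wj, fwj, hwj⟩
  refine hf.2 wi wj ?_ ⟨fwi, fwj⟩
  have hy : permR Δ (Equiv.swap 0 j) (endp Δ true wj) = y := by
    rw [hwj]; exact permR_swap_cancel Δ j y
  refine ⟨true, true, Equiv.swap 0 i * Equiv.swap 0 j, ?_, ?_⟩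
  · calc endp Δ true wi = permR Δ (Equiv.swap 0 i) y := hwi
      _ = permR Δ (Equiv.swap 0 i) (permR Δ (Equiv.swap 0 j) (endp Δ true wj)) := by rw [hy]
      _ = permR Δ (Equiv.swap 0 i * Equiv.swap 0 j) (endp Δ true wj) := permR_permR Δ _ _ _
  · show (Equiv.swap 0 i) ((Equiv.swap 0 j) 0) ≠ 0
    rw [Equiv.swap_apply_left]
    rcases eq_or_ne j 0 with hj | hj
    · subst hj
      rw [Equiv.swap_apply_left]
      exact hij
    · rcases eq_or_ne j i with hji | hji
      · exact absurd hji.symm hij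
      · rw [Equiv.swap_apply_of_ne_of_ne hj hji]
        exact hj
theorem exists_good_V (hΔ : 2 ≤ Δ) {r : ℕ} {f : Fty Δ (r + 1) → Bool}
    (hf : MatchingCertified Δ f) :
    ∃ V : Set (Rty Δ (r + 1)), MeasurableSet V ∧ Eset Δ f 0 ⊆ V ∧
      rMeas Δ (r + 1) V ≤ 1 / (Δ : ENNReal) := by
  obtain ⟨U, hUm, hUsub, hUd⟩ := exists_measurable_separation Δ hΔ (Eset Δ f)
    (analyticSet_Eset Δ hf.1) (Eset_disjoint Δ hf)
  refine ⟨⋂ i : Fin Δ, (permR Δ (Equiv.swap 0 i)) ⁻¹' (U i), ?_, ?_, ?_⟩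
  · exact MeasurableSet.iInter fun i => (measurable_permR Δ _) (hUm i)
  · intro y hy
    refine Set.mem_iInter.2 fun i => ?_
    refine hUsub i ?_
    obtain ⟨w, fw, hw⟩ := hy
    refine ⟨w, fw, ?_⟩
    rw [permR_swap_cancel]
    rw [hw, Equiv.swap_self]
    rfl
  · set V := ⋂ i : Fin Δ, (permR Δ (Equiv.swap 0 i)) ⁻¹' (U i) with hV
    have hVm : MeasurableSet V :=
      MeasurableSet.iInter fun i => (measurable_permR Δ _) (hUm i)
    have hsubU : ∀ i : Fin Δ, (permR Δ (Equiv.swap 0 i)) ⁻¹' V ⊆ U i := by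
      intro i y hy
      have h1 : permR Δ (Equiv.swap 0 i) y ∈ (permR Δ (Equiv.swap 0 i)) ⁻¹' (U i) :=
        Set.mem_iInter.1 hy i
      rwa [Set.mem_preimage, permR_swap_cancel] at h1
    have hdisj : Pairwise (Function.onFun Disjoint
        (fun i : Fin Δ => (permR Δ (Equiv.swap 0 i)) ⁻¹' V)) := by
      intro i j hij
      exact Disjoint.mono (hsubU i) (hsubU j) (hUd hij)
    have hmeasV : ∀ i : Fin Δ, rMeas Δ (r + 1) ((permR Δ (Equiv.swap 0 i)) ⁻¹' V)
        = rMeas Δ (r + 1) V := fun i =>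
      (measurePreserving_permR Δ _).measure_preimage hVm.nullMeasurableSet
    have hsum : (Δ : ENNReal) * rMeas Δ (r + 1) V ≤ 1 := by
      have hU := measure_iUnion (μ := rMeas Δ (r + 1)) hdisj
        (fun i => (measurable_permR Δ _) hVm)
      calc (Δ : ENNReal) * rMeas Δ (r + 1) V
          = ∑' i : Fin Δ, rMeas Δ (r + 1) ((permR Δ (Equiv.swap 0 i)) ⁻¹' V) := by
            rw [tsum_fintype]
            simp only [hmeasV]
            rw [Finset.sum_const, Finset.card_univ, Fintype.card_fin, nsmul_eq_mul]
        _ = rMeas Δ (r + 1) (⋃ i : Fin Δ, (permR Δ (Equiv.swap 0 i)) ⁻¹' V) := hU.symm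
        _ ≤ 1 := prob_le_one
    rw [ENNReal.le_div_iff_mul_le (Or.inl (by exact_mod_cast (NeZero.ne Δ)))
      (Or.inl (ENNReal.natCast_ne_top Δ))]
    rwa [mul_comm]

/-- **First moment bound (Proposition `one-side`).** For an `r`-round matching-certified
algorithm `f`, the expectation over a uniform `(r-1)`-flower `x` of
`Q(f,x) = Pr[dir(f,y) = 1 ∣ res₁(y) = x]` is at most `1/Δ`. -/
theorem expected_Q_le (hΔ : 2 ≤ Δ) {r : ℕ} (f : Fty Δ (r + 1) → Bool)
    (hf : MatchingCertified Δ f) :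
    ∫ x, Qdir Δ f x ∂(fMeas Δ r) ≤ 1 / (Δ : ℝ) := by
  obtain ⟨V, hVm, hVsub, hVle⟩ := exists_good_V Δ hΔ hf
  set W : Set (Fty Δ r × (Fin (Δ - 1) → Sty Δ r)) :=
    (fun p : Fty Δ r × (Fin (Δ - 1) → Sty Δ r) => extend1 Δ p.1 p.2) ⁻¹' V with hW
  have hWm : MeasurableSet W := (measurePreserving_extend1 Δ r).measurable hVm
  have hsub : ∀ x : Fty Δ r,
      {t | dir Δ f (extend1 Δ x t) = some 0} ⊆ Prod.mk x ⁻¹' W := by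
    intro x t ht
    simp only [Set.mem_setOf_eq] at ht
    show extend1 Δ x t ∈ V
    apply hVsub
    unfold dir at ht
    split at ht
    next h =>
      obtain ⟨w, fw, hw⟩ := h.choose_spec
      have hc : h.choose = (0 : Fin Δ) := Option.some.inj ht
      rw [hc] at hw
      exact ⟨w, fw, hw⟩
    next h => exact absurd ht (by simp)
  have hb : ∀ x, Qdir Δ f x ≤ (tMeas Δ r (Prod.mk x ⁻¹' W)).toReal := by
    intro x
    unfold Qdir
    apply ENNReal.toReal_mono (measure_ne_top _ _)
    exact measure_mono (hsub x)
  have hg : Measurable (fun x => tMeas Δ r (Prod.mk x ⁻¹' W)) :=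
    measurable_measure_prodMk_left hWm
  have hgi : Integrable (fun x => (tMeas Δ r (Prod.mk x ⁻¹' W)).toReal) (fMeas Δ r) := by
    apply (integrable_const (1 : ℝ)).mono' hg.ennreal_toReal.aestronglyMeasurable
    filter_upwards with x
    rw [Real.norm_eq_abs, abs_of_nonneg ENNReal.toReal_nonneg]
    calc (tMeas Δ r (Prod.mk x ⁻¹' W)).toReal ≤ (1 : ENNReal).toReal :=
        ENNReal.toReal_mono (by simp) prob_le_one
      _ = 1 := ENNReal.toReal_one
  have hstep : ∫ x, Qdir Δ f x ∂(fMeas Δ r)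
      ≤ ∫ x, (tMeas Δ r (Prod.mk x ⁻¹' W)).toReal ∂(fMeas Δ r) := by
    apply integral_mono_of_nonneg
    · filter_upwards with x
      show (0 : ℝ) ≤ Qdir Δ f x
      unfold Qdir
      exact ENNReal.toReal_nonneg
    · exact hgi
    · filter_upwards with x; exact hb x
  have hval : ∫ x, (tMeas Δ r (Prod.mk x ⁻¹' W)).toReal ∂(fMeas Δ r)
      = (((fMeas Δ r).prod (tMeas Δ r)) W).toReal := by
    rw [Measure.prod_apply hWm]
    exact integral_toReal hg.aemeasurable
      (Filter.Eventually.of_forall fun x => lt_of_le_of_lt prob_le_one ENNReal.one_lt_top)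
  have htrans : ((fMeas Δ r).prod (tMeas Δ r)) W = rMeas Δ (r + 1) V :=
    (measurePreserving_extend1 Δ r).measure_preimage hVm.nullMeasurableSet
  calc ∫ x, Qdir Δ f x ∂(fMeas Δ r)
      ≤ ∫ x, (tMeas Δ r (Prod.mk x ⁻¹' W)).toReal ∂(fMeas Δ r) := hstep
    _ = (((fMeas Δ r).prod (tMeas Δ r)) W).toReal := hval
    _ = (rMeas Δ (r + 1) V).toReal := by rw [htrans]
    _ ≤ (1 / (Δ : ENNReal)).toReal := ENNReal.toReal_mono
        (ENNReal.div_lt_top (by simp) (by exact_mod_cast NeZero.ne Δ)).ne hVle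
    _ = 1 / (Δ : ℝ) := by
        rw [ENNReal.toReal_div, ENNReal.toReal_one, ENNReal.toReal_natCast]
end

section
/- Let Q : X → [0,1] be a measurable function on a probability space X, and let an involution x ↦ x̄ on X preserve the measure. Suppose E[Q(x)] ≤ 1/Δ and E[Q(x)·Q(x̄)] ≥ (1 - P)/Δ for some Δ ≥ 1 and P ∈ [0,1]. Then for any δ ∈ (0,1], Pr[Q(x) ≥ 1-δ and Q(x̄) ≥ 1-δ] ≥ (1 - 2P/δ)/Δ. -/
open MeasureTheory

theorem good_flower_weak {X : Type*} [MeasurableSpace X] (μ : Measure X)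
    [IsProbabilityMeasure μ] (Q : X → ℝ) (hQm : Measurable Q)
    (hQ01 : ∀ x, Q x ∈ Set.Icc (0 : ℝ) 1)
    (inv : X → X) (hinv : MeasurePreserving inv μ μ) (hinvol : Function.Involutive inv)
    (Δ P : ℝ) (hΔ : 1 ≤ Δ) (hP : P ∈ Set.Icc (0 : ℝ) 1)
    (h1 : ∫ x, Q x ∂μ ≤ 1 / Δ)
    (h2 : (1 - P) / Δ ≤ ∫ x, Q x * Q (inv x) ∂μ)
    (δ : ℝ) (hδ : δ ∈ Set.Ioc (0 : ℝ) 1) :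
    (1 - 2 * P / δ) / Δ ≤ (μ {x | 1 - δ ≤ Q x ∧ 1 - δ ≤ Q (inv x)}).toReal := by
  obtain ⟨hδ0, hδ1⟩ := hδ
  obtain ⟨hP0, hP1⟩ := hP
  have hΔ0 : (0:ℝ) < Δ := lt_of_lt_of_le one_pos hΔ
  have hQim : Measurable fun x => Q (inv x) := hQm.comp hinv.measurable
  -- integrability
  have hQi : Integrable Q μ := by
    refine (integrable_const (1:ℝ)).mono' hQm.aestronglyMeasurable ?_
    filter_upwards with x
    have := hQ01 x
    rw [Real.norm_eq_abs, abs_le]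
    constructor <;> linarith [this.1, this.2]
  have hQii : Integrable (fun x => Q (inv x)) μ := by
    refine (integrable_const (1:ℝ)).mono' hQim.aestronglyMeasurable ?_
    filter_upwards with x
    have := hQ01 (inv x)
    rw [Real.norm_eq_abs, abs_le]
    constructor <;> linarith [this.1, this.2]
  have hfi : Integrable (fun x => Q x * Q (inv x)) μ := by
    refine (integrable_const (1:ℝ)).mono' (hQm.mul hQim).aestronglyMeasurable ?_
    filter_upwards with x
    have h1x := hQ01 x
    have h2x := hQ01 (inv x)
    rw [Real.norm_eq_abs, abs_le]
    constructor
    · nlinarith [h1x.1, h2x.1]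
    · nlinarith [h1x.1, h1x.2, h2x.1, h2x.2]
  -- change of variables
  have hcov : ∫ x, Q (inv x) ∂μ = ∫ x, Q x ∂μ := by
    rw [← integral_map hinv.measurable.aemeasurable hQm.aestronglyMeasurable, hinv.map_eq]
  have hg1i : Integrable (fun x => Q x * (1 - Q (inv x))) μ := by
    have h := hQi.sub hfi
    simpa [Pi.sub_def, mul_sub] using h
  have hg2i : Integrable (fun x => (1 - Q x) * Q (inv x)) μ := by
    have h := hQii.sub hfi
    simpa [Pi.sub_def, sub_mul] using h
  set t := ∫ x, Q x ∂μ with ht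
  set s := ∫ x, Q x * Q (inv x) ∂μ with hs
  set sC : Set X := {x | Q (inv x) < 1 - δ} with hsC
  set sC' : Set X := {x | Q x < 1 - δ} with hsC'
  set A : Set X := {x | 1 - δ ≤ Q x ∧ 1 - δ ≤ Q (inv x)} with hA
  have hmC : MeasurableSet sC := measurableSet_lt hQim measurable_const
  have hmC' : MeasurableSet sC' := measurableSet_lt hQm measurable_const
  have hmA : MeasurableSet A :=
    (measurableSet_le measurable_const hQm).inter (measurableSet_le measurable_const hQim)
  -- t - s identities
  have hts1 : ∫ x, Q x * (1 - Q (inv x)) ∂μ = t - s := by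
    have : (fun x => Q x * (1 - Q (inv x))) = fun x => Q x - Q x * Q (inv x) := by
      funext x; ring
    rw [this, integral_sub hQi hfi]
  have hts2 : ∫ x, (1 - Q x) * Q (inv x) ∂μ = t - s := by
    have : (fun x => (1 - Q x) * Q (inv x)) = fun x => Q (inv x) - Q x * Q (inv x) := by
      funext x; ring
    rw [this, integral_sub hQii hfi, hcov]
  -- key bound 1 : δ * ∫_{sC} Q ≤ t - s
  have key1 : δ * ∫ x in sC, Q x ∂μ ≤ t - s := by
    have step1 : δ * ∫ x in sC, Q x ∂μ ≤ ∫ x in sC, Q x * (1 - Q (inv x)) ∂μ := by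
      rw [← integral_const_mul]
      refine setIntegral_mono_on (hQi.const_mul δ).integrableOn
        hg1i.integrableOn hmC ?_
      intro x hx
      have h1x := hQ01 x
      have hx' : Q (inv x) < 1 - δ := hx
      nlinarith [h1x.1]
    have step2 : ∫ x in sC, Q x * (1 - Q (inv x)) ∂μ ≤ ∫ x, Q x * (1 - Q (inv x)) ∂μ := by
      refine setIntegral_le_integral hg1i ?_
      filter_upwards with x
      simp only [Pi.zero_apply]
      have h1x := hQ01 x
      have h2x := hQ01 (inv x)
      nlinarith [h1x.1, h2x.2]
    linarith [hts1 ▸ (step1.trans step2)]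
  -- key bound 2 : δ * ∫_{sC'} Q∘inv ≤ t - s
  have key2 : δ * ∫ x in sC', Q (inv x) ∂μ ≤ t - s := by
    have step1 : δ * ∫ x in sC', Q (inv x) ∂μ ≤ ∫ x in sC', (1 - Q x) * Q (inv x) ∂μ := by
      rw [← integral_const_mul]
      refine setIntegral_mono_on (hQii.const_mul δ).integrableOn
        hg2i.integrableOn hmC' ?_
      intro x hx
      have h2x := hQ01 (inv x)
      have hx' : Q x < 1 - δ := hx
      nlinarith [h2x.1]
    have step2 : ∫ x in sC', (1 - Q x) * Q (inv x) ∂μ ≤ ∫ x, (1 - Q x) * Q (inv x) ∂μ := by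
      refine setIntegral_le_integral hg2i ?_
      filter_upwards with x
      simp only [Pi.zero_apply]
      have h1x := hQ01 x
      have h2x := hQ01 (inv x)
      nlinarith [h1x.2, h2x.1]
    linarith [hts2 ▸ (step1.trans step2)]
  -- key bound 3 : ∫_{sC' ∩ sCᶜ} Q ≤ ∫_{sC'} Q∘inv
  have key3 : ∫ x in sC' ∩ sCᶜ, Q x ∂μ ≤ ∫ x in sC', Q (inv x) ∂μ := by
    have step1 : ∫ x in sC' ∩ sCᶜ, Q x ∂μ ≤ ∫ x in sC' ∩ sCᶜ, Q (inv x) ∂μ := by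
      refine setIntegral_mono_on hQi.integrableOn hQii.integrableOn
        (hmC'.inter hmC.compl) ?_
      intro x hx
      obtain ⟨hx1, hx2⟩ := hx
      have hx2' : ¬ (Q (inv x) < 1 - δ) := hx2
      have hx1' : Q x < 1 - δ := hx1
      push_neg at hx2'
      linarith
    have step2 : ∫ x in sC' ∩ sCᶜ, Q (inv x) ∂μ ≤ ∫ x in sC', Q (inv x) ∂μ := by
      refine setIntegral_mono_set hQii.integrableOn ?_ (HasSubset.Subset.eventuallyLE Set.inter_subset_left)
      filter_upwards with x
      exact (hQ01 (inv x)).1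
    exact step1.trans step2
  -- decomposition of Aᶜ
  have hAc : Aᶜ = sC ∪ (sC' ∩ sCᶜ) := by
    ext x
    simp only [hA, hsC, hsC', Set.mem_compl_iff, Set.mem_setOf_eq, Set.mem_union,
      Set.mem_inter_iff, not_and_or, not_le, not_lt]
    constructor
    · rintro (h | h)
      · rcases lt_or_ge (Q (inv x)) (1 - δ) with h' | h'
        · exact Or.inl h'
        · exact Or.inr ⟨h, h'⟩
      · exact Or.inl h
    · rintro (h | ⟨h, _⟩)
      · exact Or.inr h
      · exact Or.inl h
  have hdisj : Disjoint sC (sC' ∩ sCᶜ) :=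
    Set.disjoint_left.mpr (fun x hx ⟨_, hx2⟩ => hx2 hx)
  have hsplit : ∫ x in Aᶜ, Q x ∂μ = (∫ x in sC, Q x ∂μ) + ∫ x in sC' ∩ sCᶜ, Q x ∂μ := by
    rw [hAc]
    exact setIntegral_union hdisj (hmC'.inter hmC.compl) hQi.integrableOn hQi.integrableOn
  have htotal : (∫ x in A, Q x ∂μ) + ∫ x in Aᶜ, Q x ∂μ = t := integral_add_compl hmA hQi
  -- μ A ≥ ∫_A Q
  have hμA : ∫ x in A, Q x ∂μ ≤ (μ A).toReal := by
    have : ∫ x in A, Q x ∂μ ≤ ∫ _ in A, (1:ℝ) ∂μ := by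
      refine setIntegral_mono_on hQi.integrableOn ((integrableOn_const_iff).mpr (Or.inr ?_)) hmA
        (fun x _ => (hQ01 x).2)
      exact measure_lt_top μ A
    simpa [measureReal_def] using this
  -- arithmetic
  have hΔt : t * Δ ≤ 1 := (le_div_iff₀ hΔ0).mp h1
  have hΔs : 1 - P ≤ s * Δ := by linarith [(div_le_iff₀ hΔ0).mp h2]
  have hu := key1
  have hw : δ * ∫ x in sC' ∩ sCᶜ, Q x ∂μ ≤ t - s := by
    have : δ * ∫ x in sC' ∩ sCᶜ, Q x ∂μ ≤ δ * ∫ x in sC', Q (inv x) ∂μ :=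
      mul_le_mul_of_nonneg_left key3 hδ0.le
    linarith
  have hrewrite : (1 - 2 * P / δ) / Δ = (δ - 2 * P) / (δ * Δ) := by
    field_simp
  rw [hrewrite, div_le_iff₀ (mul_pos hδ0 hΔ0)]
  have ha : ∫ x in A, Q x ∂μ =
      t - (∫ x in sC, Q x ∂μ) - ∫ x in sC' ∩ sCᶜ, Q x ∂μ := by
    linarith [hsplit, htotal]
  have hfinal : δ - 2 * P ≤ (∫ x in A, Q x ∂μ) * (δ * Δ) := by
    rw [ha]
    nlinarith [mul_le_mul_of_nonneg_left hu hΔ0.le,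
      mul_le_mul_of_nonneg_left hw hΔ0.le,
      mul_le_mul_of_nonneg_left hΔt (by linarith : (0:ℝ) ≤ 2 - δ), hΔs]
  calc δ - 2 * P ≤ (∫ x in A, Q x ∂μ) * (δ * Δ) := hfinal
    _ ≤ (μ A).toReal * (δ * Δ) := by
        exact mul_le_mul_of_nonneg_right hμA (mul_pos hδ0 hΔ0).le
end

section
/- Let Q : X → [0,1] be measurable on a probability space X with a measure-preserving involution x ↦ x̄, and suppose E[Q(x)] ≤ 1/Δ and E[Q(x)·Q(x̄)] ≥ (1 - P)/Δ for some Δ ≥ 1, P ∈ [0,1]. Then for any ξ ∈ (0,1), E_{τ∼Uniform[0,ξ]}[ Pr_x[Q(x) ≥ 1-τ and Q(x̄) ≥ 1-τ] ] ≥ (1 - 7P/ξ)/Δ. -/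
open MeasureTheory ENNReal

lemma pointwise_bound (ξ a b : ℝ) (hξ0 : 0 < ξ) (hξ1 : ξ < 1)
    (ha : a ∈ Set.Icc (0:ℝ) 1) (hb : b ∈ Set.Icc (0:ℝ) 1) :
    ξ * (a * b) - 3 * (a * (1 - b)) - 3 * (b * (1 - a)) ≤
      max (ξ - (1 - min a b)) 0 := by
  obtain ⟨ha0, ha1⟩ := ha; obtain ⟨hb0, hb1⟩ := hb
  rcases le_total a b with h | h
  · rw [min_eq_left h]
    rcases le_or_gt (1 - a) ξ with hc | hc
    · refine le_max_of_le_left ?_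
      rcases le_total (3*b) 1 with h3 | h3
      · nlinarith [mul_nonneg ha0 hb0, mul_nonneg ha0 (sub_nonneg.2 hb1), mul_nonneg (sub_nonneg.2 ha1) hb0]
      · nlinarith [mul_nonneg ha0 hb0, mul_nonneg (sub_nonneg.2 ha1) (sub_nonneg.2 hb1), mul_nonneg ha0 (sub_nonneg.2 hb1)]
    · refine le_max_of_le_right ?_
      nlinarith [mul_le_mul_of_nonneg_right hc.le (mul_nonneg ha0 hb0), mul_nonneg (mul_nonneg hb0 (sub_nonneg.2 ha1)) (by linarith : (0:ℝ) ≤ 3 - a), mul_nonneg ha0 (sub_nonneg.2 hb1)]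
  · rw [min_eq_right h]
    rcases le_or_gt (1 - b) ξ with hc | hc
    · refine le_max_of_le_left ?_
      rcases le_total (3*a) 1 with h3 | h3
      · nlinarith [mul_nonneg ha0 hb0, mul_nonneg hb0 (sub_nonneg.2 ha1), mul_nonneg (sub_nonneg.2 hb1) ha0]
      · nlinarith [mul_nonneg ha0 hb0, mul_nonneg (sub_nonneg.2 hb1) (sub_nonneg.2 ha1), mul_nonneg hb0 (sub_nonneg.2 ha1)]
    · refine le_max_of_le_right ?_
      nlinarith [mul_le_mul_of_nonneg_right hc.le (mul_nonneg ha0 hb0), mul_nonneg (mul_nonneg ha0 (sub_nonneg.2 hb1)) (by linarith : (0:ℝ) ≤ 3 - b), mul_nonneg hb0 (sub_nonneg.2 ha1)]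

lemma fubini_step {X : Type*} [MeasurableSpace X] (μ : Measure X) [IsProbabilityMeasure μ]
    (h : X → ℝ) (hhm : Measurable h) (hh0 : ∀ x, 0 ≤ h x) (ξ : ℝ) :
    ∫ τ in Set.Icc (0:ℝ) ξ, (μ {x | h x ≤ τ}).toReal = ∫ x, max (ξ - h x) 0 ∂μ := by
  have hSmeas : ∀ τ : ℝ, MeasurableSet {x | h x ≤ τ} := fun τ => measurableSet_le hhm measurable_const
  have hmono : Monotone (fun τ : ℝ => (μ {x | h x ≤ τ}).toReal) := by
    intro s t hst
    exact ENNReal.toReal_mono (measure_ne_top μ _)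
      (measure_mono fun x hx => le_trans hx hst)
  rw [integral_eq_lintegral_of_nonneg_ae (ae_of_all _ fun τ => ENNReal.toReal_nonneg)
      hmono.measurable.aestronglyMeasurable,
    integral_eq_lintegral_of_nonneg_ae (f := fun x => max (ξ - h x) 0)
      (ae_of_all _ fun x => le_max_right _ _)
      (((measurable_const.sub hhm).max measurable_const).aestronglyMeasurable)]
  congr 1
  have hswapm : Measurable (Function.uncurry fun (τ : ℝ) (x : X) =>
      (if h x ≤ τ then (1:ℝ≥0∞) else 0)) := by
    have hs : MeasurableSet {p : ℝ × X | h p.2 ≤ p.1} :=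
      measurableSet_le (hhm.comp measurable_snd) measurable_fst
    exact Measurable.ite hs measurable_const measurable_const
  calc ∫⁻ τ in Set.Icc (0:ℝ) ξ, ENNReal.ofReal ((μ {x | h x ≤ τ}).toReal)
      = ∫⁻ τ in Set.Icc (0:ℝ) ξ, μ {x | h x ≤ τ} :=
        lintegral_congr fun τ => ENNReal.ofReal_toReal (measure_ne_top μ _)
    _ = ∫⁻ τ in Set.Icc (0:ℝ) ξ, ∫⁻ x, (if h x ≤ τ then (1:ℝ≥0∞) else 0) ∂μ := by
        refine lintegral_congr fun τ => ?_
        rw [← lintegral_indicator_one (hSmeas τ)]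
        exact lintegral_congr fun x => by
          by_cases hx : h x ≤ τ <;> simp [Set.indicator, hx]
    _ = ∫⁻ x, (∫⁻ τ in Set.Icc (0:ℝ) ξ, (if h x ≤ τ then (1:ℝ≥0∞) else 0)) ∂μ :=
        lintegral_lintegral_swap hswapm.aemeasurable
    _ = ∫⁻ x, ENNReal.ofReal (max (ξ - h x) 0) ∂μ := by
        refine lintegral_congr fun x => ?_
        have e1 : (fun τ => if h x ≤ τ then (1:ℝ≥0∞) else 0)
            = (Set.Ici (h x)).indicator 1 := by
          ext τ; by_cases hc : h x ≤ τ <;> simp [Set.indicator, hc]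
        rw [e1, lintegral_indicator_one measurableSet_Ici,
          Measure.restrict_apply measurableSet_Ici]
        have e2 : Set.Ici (h x) ∩ Set.Icc 0 ξ = Set.Icc (h x) ξ := by
          ext τ
          simp only [Set.mem_inter_iff, Set.mem_Ici, Set.mem_Icc]
          exact ⟨fun ⟨h1, _, h3⟩ => ⟨h1, h3⟩, fun ⟨h1, h2⟩ => ⟨h1, le_trans (hh0 x) h1, h2⟩⟩
        rw [e2, Real.volume_Icc]
        rcases le_total 0 (ξ - h x) with hc | hc
        · rw [max_eq_left hc]
        · rw [max_eq_right hc, ENNReal.ofReal_of_nonpos hc, ENNReal.ofReal_zero]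

theorem good_flower_strong {X : Type*} [MeasurableSpace X] (μ : Measure X)
    [IsProbabilityMeasure μ] (Q : X → ℝ) (hQm : Measurable Q)
    (hQ01 : ∀ x, Q x ∈ Set.Icc (0 : ℝ) 1)
    (inv : X → X) (hinv : MeasurePreserving inv μ μ) (hinvol : Function.Involutive inv)
    (Δ P : ℝ) (hΔ : 1 ≤ Δ) (hP : P ∈ Set.Icc (0 : ℝ) 1)
    (h1 : ∫ x, Q x ∂μ ≤ 1 / Δ)
    (h2 : (1 - P) / Δ ≤ ∫ x, Q x * Q (inv x) ∂μ)
    (ξ : ℝ) (hξ : ξ ∈ Set.Ioo (0 : ℝ) 1) :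
    (1 - 7 * P / ξ) / Δ ≤
      (∫ τ in Set.Icc (0 : ℝ) ξ,
        (μ {x | 1 - τ ≤ Q x ∧ 1 - τ ≤ Q (inv x)}).toReal) / ξ := by
  obtain ⟨hξ0, hξ1⟩ := hξ
  obtain ⟨hP0, hP1⟩ := hP
  have hΔ0 : (0:ℝ) < Δ := lt_of_lt_of_le one_pos hΔ
  have hQbm : Measurable (fun x => Q (inv x)) := hQm.comp hinv.measurable
  have hhm : Measurable (fun x => 1 - min (Q x) (Q (inv x))) :=
    measurable_const.sub (hQm.min hQbm)
  have hh0 : ∀ x, 0 ≤ 1 - min (Q x) (Q (inv x)) := fun x =>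
    sub_nonneg.2 (min_le_of_left_le (hQ01 x).2)
  -- rewrite the set
  have hset : ∀ τ : ℝ, {x | 1 - τ ≤ Q x ∧ 1 - τ ≤ Q (inv x)}
      = {x | (fun x => 1 - min (Q x) (Q (inv x))) x ≤ τ} := by
    intro τ; ext x
    simp only [Set.mem_setOf_eq, sub_le_comm, le_min_iff]
  have key := fubini_step μ (fun x => 1 - min (Q x) (Q (inv x))) hhm hh0 ξ
  -- integrability
  have hbd : ∀ (f : X → ℝ), Measurable f → (∀ x, |f x| ≤ 7) → Integrable f μ := fun f hf hb =>
    Integrable.mono' (integrable_const 7) hf.aestronglyMeasurable (ae_of_all _ hb)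
  have hIQ : Integrable Q μ := hbd Q hQm fun x => by
    have := (hQ01 x).1; have := (hQ01 x).2; rw [abs_le]; constructor <;> linarith
  have hIQQ : Integrable (fun x => Q x * Q (inv x)) μ := by
    refine hbd _ (hQm.mul hQbm) fun x => ?_
    have h1 := hQ01 x; have h2 := hQ01 (inv x)
    rw [abs_le]; constructor <;> nlinarith [h1.1, h1.2, h2.1, h2.2]
  have hIA : Integrable (fun x => Q x * (1 - Q (inv x))) μ := by
    refine hbd _ (hQm.mul (measurable_const.sub hQbm)) fun x => ?_
    have h1 := hQ01 x; have h2 := hQ01 (inv x)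
    rw [abs_le]; constructor <;> nlinarith [h1.1, h1.2, h2.1, h2.2]
  have hIB : Integrable (fun x => Q (inv x) * (1 - Q x)) μ := by
    refine hbd _ (hQbm.mul (measurable_const.sub hQm)) fun x => ?_
    have h1 := hQ01 x; have h2 := hQ01 (inv x)
    rw [abs_le]; constructor <;> nlinarith [h1.1, h1.2, h2.1, h2.2]
  have hImax : Integrable (fun x => max (ξ - (1 - min (Q x) (Q (inv x)))) 0) μ := by
    refine hbd _ ((measurable_const.sub hhm).max measurable_const) fun x => ?_
    have h1 := hQ01 x; have h2 := hQ01 (inv x)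
    rw [abs_le]
    constructor
    · have := le_max_right (ξ - (1 - min (Q x) (Q (inv x)))) 0; linarith
    · rcases max_cases (ξ - (1 - min (Q x) (Q (inv x)))) 0 with ⟨he, _⟩ | ⟨he, _⟩ <;>
        rw [he]
      · have : min (Q x) (Q (inv x)) ≤ 1 := min_le_of_left_le h1.2
        linarith
      · norm_num
  -- bound on ∫ Q (1 - Q∘inv)
  have e1 : ∫ x, Q x * (1 - Q (inv x)) ∂μ = (∫ x, Q x ∂μ) - ∫ x, Q x * Q (inv x) ∂μ := by
    rw [← integral_sub hIQ hIQQ]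
    exact integral_congr_ae (ae_of_all _ fun x => by ring)
  have hA : ∫ x, Q x * (1 - Q (inv x)) ∂μ ≤ P / Δ := by
    rw [e1]
    have : (1:ℝ)/Δ - (1-P)/Δ = P/Δ := by ring
    linarith
  -- symmetry: ∫ Q∘inv (1 - Q) = ∫ Q (1 - Q∘inv)
  have hB : ∫ x, Q (inv x) * (1 - Q x) ∂μ = ∫ x, Q x * (1 - Q (inv x)) ∂μ := by
    have hgm : Measurable (fun y => Q y * (1 - Q (inv y))) :=
      hQm.mul (measurable_const.sub hQbm)
    have hmap : μ.map inv = μ := hinv.map_eq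
    have hcomp : ∫ y, Q y * (1 - Q (inv y)) ∂(μ.map inv)
        = ∫ x, Q (inv x) * (1 - Q (inv (inv x))) ∂μ :=
      integral_map hinv.measurable.aemeasurable
        (by rw [hmap]; exact hgm.aestronglyMeasurable)
    rw [hmap] at hcomp
    rw [hcomp]
    exact integral_congr_ae (ae_of_all _ fun x => by simp only [hinvol x])
  -- pointwise bound and integration
  have hpt : ∀ x, ξ * (Q x * Q (inv x)) - 3 * (Q x * (1 - Q (inv x)))
      - 3 * (Q (inv x) * (1 - Q x)) ≤ max (ξ - (1 - min (Q x) (Q (inv x)))) 0 := fun x =>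
    pointwise_bound ξ (Q x) (Q (inv x)) hξ0 hξ1 (hQ01 x) (hQ01 (inv x))
  have hcomb : Integrable (fun x => ξ * (Q x * Q (inv x)) - 3 * (Q x * (1 - Q (inv x)))
      - 3 * (Q (inv x) * (1 - Q x))) μ :=
    ((hIQQ.const_mul ξ).sub (hIA.const_mul 3)).sub (hIB.const_mul 3)
  have hIle : ∫ x, (ξ * (Q x * Q (inv x)) - 3 * (Q x * (1 - Q (inv x)))
      - 3 * (Q (inv x) * (1 - Q x))) ∂μ
      ≤ ∫ x, max (ξ - (1 - min (Q x) (Q (inv x)))) 0 ∂μ :=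
    integral_mono hcomb hImax hpt
  have hsplit : ∫ x, (ξ * (Q x * Q (inv x)) - 3 * (Q x * (1 - Q (inv x)))
      - 3 * (Q (inv x) * (1 - Q x))) ∂μ
      = ξ * (∫ x, Q x * Q (inv x) ∂μ) - 3 * (∫ x, Q x * (1 - Q (inv x)) ∂μ)
        - 3 * (∫ x, Q (inv x) * (1 - Q x) ∂μ) := by
    have hc1 : Integrable (fun x => ξ * (Q x * Q (inv x))
        - 3 * (Q x * (1 - Q (inv x)))) μ := (hIQQ.const_mul ξ).sub (hIA.const_mul 3)
    have hc2 : Integrable (fun x => ξ * (Q x * Q (inv x))) μ := hIQQ.const_mul ξ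
    have hc3 : Integrable (fun x => 3 * (Q x * (1 - Q (inv x)))) μ := hIA.const_mul 3
    have hc4 : Integrable (fun x => 3 * (Q (inv x) * (1 - Q x))) μ := hIB.const_mul 3
    rw [integral_sub hc1 hc4, integral_sub hc2 hc3,
      integral_const_mul, integral_const_mul, integral_const_mul]
  have h5 : ξ * ((1 - P) / Δ) ≤ ξ * ∫ x, Q x * Q (inv x) ∂μ :=
    mul_le_mul_of_nonneg_left h2 hξ0.le
  have hfin : (ξ - 7 * P) / Δ ≤ ∫ x, max (ξ - (1 - min (Q x) (Q (inv x)))) 0 ∂μ := by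
    have e6 : ξ * ((1-P)/Δ) - 3*(P/Δ) - 3*(P/Δ) - (ξ - 7*P)/Δ = P*(1-ξ)/Δ := by ring
    have h7 : 0 ≤ P*(1-ξ)/Δ := div_nonneg (mul_nonneg hP0 (by linarith)) hΔ0.le
    have hIle2 := hIle
    rw [hsplit] at hIle2
    linarith
  -- conclude
  simp only [hset]
  rw [key]
  have heq : (1 - 7 * P / ξ) / Δ = ((ξ - 7 * P) / Δ) / ξ := by
    rw [show (1 : ℝ) - 7 * P / ξ = (ξ - 7 * P) / ξ from by rw [sub_div, div_self hξ0.ne'],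
      div_right_comm]
  rw [heq]
  gcongr
end
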